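/- arXiv:2502.06202 — 5 statements merged into one kernel-verified Lean document; each statement's English description precedes it below -/
import Mathlib

section
/- Let X = T(ℤ^d) be a lattice with λ₁^(∞) ≥ C (det T)^{1/d} for some C > 0. Then the mesh ratio of X over ℝ^d satisfies ρ_∞(X; ℝ^d) = h_∞(X; ℝ^d)/q_∞(X; ℝ^d) ≤ d/C^d. -/
/-- Covering radius in the `ℓ_∞` norm of a point set `P` with respect to a domain `Ω`. -/
noncomputable def covRadInf {d : ℕ} (P Ω : Set (Fin d → ℝ)) : ℝ :=
  ⨆ x : Ω, ⨅ y : P, dist (x : Fin d → ℝ) (y : Fin d → ℝ)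

/-- Separation radius in the `ℓ_∞` norm of a point set `P`: half the minimal distance between
two distinct points of `P`. -/
noncomputable def sepRadInf {d : ℕ} (P : Set (Fin d → ℝ)) : ℝ :=
  sInf {r : ℝ | ∃ x ∈ P, ∃ y ∈ P, x ≠ y ∧ r = dist x y} / 2

/-- The `i`-th successive minimum of `X ⊆ ℝ^d` in the `ℓ_∞` norm. -/
noncomputable def succMinInf {d : ℕ} (X : Set (Fin d → ℝ)) (i : ℕ) : ℝ :=
  sInf {l : ℝ | 0 < l ∧ ∃ v : Fin i → (Fin d → ℝ),
    (∀ j, v j ∈ X ∧ ‖v j‖ ≤ l) ∧ LinearIndependent ℝ v}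

/-- The lattice `T(ℤ^d)`. -/
def lattPt {d : ℕ} (T : Matrix (Fin d) (Fin d) ℝ) : Set (Fin d → ℝ) :=
  {x | ∃ k : Fin d → ℤ, x = T.mulVec (fun i => (k i : ℝ))}

section MeshAux

open MeasureTheory Set Submodule

variable {d : ℕ}

/-- The lattice as a `ℤ`-submodule. -/
private def lattMod (T : Matrix (Fin d) (Fin d) ℝ) : Submodule ℤ (Fin d → ℝ) where
  carrier := lattPt T
  zero_mem' := by
    refine ⟨0, ?_⟩
    have : (fun i => (((0 : Fin d → ℤ) i : ℝ))) = (0 : Fin d → ℝ) := by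
      funext i; simp
    rw [this, Matrix.mulVec_zero]
  add_mem' := by
    rintro x y ⟨k, rfl⟩ ⟨k', rfl⟩
    refine ⟨k + k', ?_⟩
    have : (fun i => (((k + k') i : ℤ) : ℝ))
        = (fun i => ((k i : ℤ) : ℝ)) + (fun i => ((k' i : ℤ) : ℝ)) := by
      funext i; simp
    rw [this, Matrix.mulVec_add]
  smul_mem' := by
    rintro z x ⟨k, rfl⟩
    refine ⟨z • k, ?_⟩
    have : (fun i => (((z • k) i : ℤ) : ℝ)) = (z : ℝ) • (fun i => ((k i : ℤ) : ℝ)) := by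
      funext i; simp
    rw [this, Matrix.mulVec_smul, Int.cast_smul_eq_zsmul]

private theorem mem_lattMod_iff {T : Matrix (Fin d) (Fin d) ℝ} {x : Fin d → ℝ} :
    x ∈ lattMod T ↔ x ∈ lattPt T := Iff.rfl


/-- Blichfeldt-type packing bound: a measurable set whose difference set meets the lattice
only at `0` has volume at most `|det T|`. -/
private theorem volume_le_of_packing {T : Matrix (Fin d) (Fin d) ℝ} (hdet : T.det ≠ 0)
    {A : Set (Fin d → ℝ)} (hA : MeasurableSet A)
    (hinj : ∀ a ∈ A, ∀ b ∈ A, a - b ∈ lattPt T → a = b) :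
    volume A ≤ ENNReal.ofReal |T.det| := by
  classical
  have hu : IsUnit T.det := isUnit_iff_ne_zero.mpr hdet
  haveI : Invertible T := T.invertibleOfIsUnitDet hu
  set b : Module.Basis (Fin d) ℝ (Fin d → ℝ) :=
    (Pi.basisFun ℝ (Fin d)).map (T.toLinearEquiv' ‹Invertible T›) with hb_def
  have hcoe : ∀ v : Fin d → ℝ, (T.toLinearEquiv' ‹Invertible T›) v = T.mulVec v := by
    intro v
    have h2 := Matrix.toLinearEquiv'_apply T ‹Invertible T›
    have h3 : (T.toLinearEquiv' ‹Invertible T›) v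
        = ((T.toLinearEquiv' ‹Invertible T› : Module.End ℝ (Fin d → ℝ))) v := rfl
    rw [h3, h2, Matrix.toLin'_apply]
  have hbi : ∀ i, b i = T.mulVec ((Pi.single i 1 : Fin d → ℝ)) := by
    intro i
    rw [hb_def, Module.Basis.map_apply, Pi.basisFun_apply, hcoe]
  have hcast : ∀ i : Fin d, (fun j => (((Pi.single i 1 : Fin d → ℤ)) j : ℝ))
      = (Pi.single i 1 : Fin d → ℝ) := by
    intro i
    funext j
    by_cases h : j = i <;> simp [Pi.single_apply, h]
  have hbmem : ∀ i, b i ∈ lattPt T := by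
    intro i
    refine ⟨Pi.single i 1, ?_⟩
    rw [hcast i]
    exact hbi i
  -- the span of `b` over ℤ is exactly the lattice
  have hspan : ((span ℤ (Set.range ⇑b)) : Set (Fin d → ℝ)) = lattPt T := by
    apply subset_antisymm
    · intro x hx
      have hle : span ℤ (Set.range ⇑b) ≤ lattMod T := by
        rw [Submodule.span_le]
        rintro y ⟨i, rfl⟩
        exact hbmem i
      exact hle hx
    · rintro x ⟨k, rfl⟩
      have hx : T.mulVec (fun i => (k i : ℝ)) = ∑ i, (k i : ℝ) • b i := by
        have h1 : (fun i => (k i : ℝ)) = ∑ i, (k i : ℝ) • (Pi.single i 1 : Fin d → ℝ) := by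
          funext j
          rw [Finset.sum_apply]
          simp [Pi.single_apply]
        rw [h1]
        rw [show T.mulVec (∑ i, (k i : ℝ) • (Pi.single i 1 : Fin d → ℝ))
              = T.mulVecLin (∑ i, (k i : ℝ) • (Pi.single i 1 : Fin d → ℝ)) from rfl]
        rw [map_sum]
        refine Finset.sum_congr rfl (fun i _ => ?_)
        rw [_root_.map_smul]
        congr 1
        rw [Matrix.mulVecLin_apply, hbi i]
      rw [hx]
      refine Submodule.sum_mem _ (fun i _ => ?_)
      rw [show ((k i : ℝ) • b i) = (k i) • b i from Int.cast_smul_eq_zsmul ℝ (k i) (b i)]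
      exact Submodule.smul_mem _ (k i) (Submodule.subset_span ⟨i, rfl⟩)
  -- volume of the fundamental domain
  have hvolF : volume (ZSpan.fundamentalDomain b) = ENNReal.ofReal |T.det| := by
    rw [ZSpan.volume_fundamentalDomain]
    have hofb : Matrix.of ⇑b = T.transpose := by
      ext i j
      rw [Matrix.of_apply, hbi i, Matrix.mulVec_single_one]
      rfl
    rw [hofb, Matrix.det_transpose]
  by_contra hcon
  push_neg at hcon
  rw [← hvolF] at hcon
  have fund := ZSpan.isAddFundamentalDomain' b volume
  haveI : Countable (span ℤ (Set.range ⇑b)).toAddSubgroup :=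
    inferInstanceAs (Countable (span ℤ (Set.range ⇑b)))
  obtain ⟨x, y, hxy, hnd⟩ :=
    exists_pair_mem_lattice_not_disjoint_vadd fund hA.nullMeasurableSet hcon
  obtain ⟨z, hz1, hz2⟩ := Set.not_disjoint_iff.mp hnd
  obtain ⟨a, ha, haz⟩ := hz1
  obtain ⟨a', ha', haz'⟩ := hz2
  have hxa : (x : Fin d → ℝ) + a = z := haz
  have hya : (y : Fin d → ℝ) + a' = z := haz'
  have hmem : a - a' ∈ lattPt T := by
    have heq : a - a' = ((y : Fin d → ℝ) - (x : Fin d → ℝ)) := by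
      have h5 := hxa.trans hya.symm
      linear_combination h5
    rw [heq, ← hspan]
    exact Submodule.sub_mem _ (SetLike.coe_mem y) (SetLike.coe_mem x)
  have haa : a = a' := hinj a ha a' ha' hmem
  apply hxy
  have hxyv : (x : Fin d → ℝ) = (y : Fin d → ℝ) := by
    have h5 := hxa.trans hya.symm
    rw [haa] at h5
    linear_combination h5
  exact Subtype.ext (by exact_mod_cast hxyv)


/-- The stacked-boxes packing set. -/
private theorem stack_packing {T : Matrix (Fin d) (Fin d) ℝ}
    (lam : ℝ) (hlam : 0 < lam) (k : ℕ) (hk : 1 ≤ k)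
    (hsmall : ∀ w ∈ lattPt T, ‖w‖ < lam → w = 0)
    (f : (Fin d → ℝ) →ₗ[ℝ] ℝ) (hf : f ≠ 0)
    (hvan : ∀ w ∈ lattPt T, ‖w‖ < (k : ℝ) * lam → f w = 0) :
    ∃ A : Set (Fin d → ℝ), MeasurableSet A ∧
      volume A = ENNReal.ofReal ((k : ℝ) * lam ^ d) ∧
      (∀ a ∈ A, ∀ b ∈ A, ‖a - b‖ < (k : ℝ) * lam) ∧
      (∀ a ∈ A, ∀ b ∈ A, a - b ∈ lattPt T → a = b) := by
  classical
  have hk1 : (1 : ℝ) ≤ (k : ℝ) := by exact_mod_cast hk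
  set n : Fin d → ℝ := fun i => f (Pi.single i 1) with hn_def
  have hexp : ∀ x : Fin d → ℝ, f x = ∑ i, x i * n i := by
    intro x
    conv_lhs => rw [pi_eq_sum_univ x]
    rw [map_sum]
    refine Finset.sum_congr rfl (fun i _ => ?_)
    rw [_root_.map_smul, smul_eq_mul, hn_def]
    congr 2
    funext j
    by_cases h : i = j <;> simp [Pi.single_apply, h, eq_comm]
  have hnex : ∃ i, n i ≠ 0 := by
    by_contra h0
    push_neg at h0
    apply hf
    refine LinearMap.ext (fun x => ?_)
    rw [hexp x]
    simp [h0]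
  set N1 : ℝ := ∑ i, |n i| with hN1_def
  have hN1pos : 0 < N1 := by
    obtain ⟨i0, hi0⟩ := hnex
    exact Finset.sum_pos' (fun i _ => abs_nonneg _) ⟨i0, Finset.mem_univ _, abs_pos.mpr hi0⟩
  set u : Fin d → ℝ := fun i => if n i < 0 then (-1 : ℝ) else 1 with hu_def
  have hfu : f u = N1 := by
    rw [hexp u, hN1_def]
    refine Finset.sum_congr rfl (fun i _ => ?_)
    rw [hu_def]
    by_cases h : n i < 0
    · simp only [h, if_true]
      rw [abs_of_neg h]; ring
    · simp only [h, if_false]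
      rw [abs_of_nonneg (not_lt.mp h)]; ring
  have huabs : ∀ i, |u i| = 1 := by
    intro i; rw [hu_def]; by_cases h : n i < 0 <;> simp [h]
  have hfle : ∀ z : Fin d → ℝ, |f z| ≤ N1 * ‖z‖ := by
    intro z
    rw [hexp z]
    calc |∑ i, z i * n i| ≤ ∑ i, |z i * n i| := Finset.abs_sum_le_sum_abs _ _
      _ ≤ ∑ i, ‖z‖ * |n i| := by
          refine Finset.sum_le_sum (fun i _ => ?_)
          rw [abs_mul]
          refine mul_le_mul_of_nonneg_right ?_ (abs_nonneg _)
          exact (Real.norm_eq_abs (z i)) ▸ norm_le_pi_norm z i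
      _ = N1 * ‖z‖ := by rw [← Finset.mul_sum]; ring
  set box : ℕ → Set (Fin d → ℝ) := fun j =>
    Set.pi Set.univ (fun i =>
      Set.Ioo ((j : ℝ) * lam * u i - lam / 2) ((j : ℝ) * lam * u i + lam / 2)) with hbox_def
  have hbox_mem : ∀ (j : ℕ) (x : Fin d → ℝ),
      x ∈ box j ↔ ∀ i, |x i - (j : ℝ) * lam * u i| < lam / 2 := by
    intro j x
    rw [hbox_def]
    simp only [Set.mem_pi, Set.mem_univ, forall_true_left, Set.mem_Ioo]
    refine forall_congr' (fun i => ?_)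
    rw [abs_sub_lt_iff]
    constructor
    · rintro ⟨h1, h2⟩; exact ⟨by linarith, by linarith⟩
    · rintro ⟨h1, h2⟩; exact ⟨by linarith, by linarith⟩
  have hwin : ∀ (j : ℕ) (x : Fin d → ℝ), x ∈ box j →
      |f x - (j : ℝ) * lam * N1| < N1 * (lam / 2) := by
    intro j x hx
    have hcen : ‖x - ((j : ℝ) * lam) • u‖ < lam / 2 := by
      rw [pi_norm_lt_iff (by positivity : (0:ℝ) < lam / 2)]
      intro i
      have h1 := (hbox_mem j x).mp hx i
      have h2 : (x - ((j : ℝ) * lam) • u) i = x i - (j : ℝ) * lam * u i := by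
        simp [Pi.sub_apply, Pi.smul_apply, smul_eq_mul, mul_assoc]
      rw [Real.norm_eq_abs, h2]
      exact h1
    have h1 : f x - (j : ℝ) * lam * N1 = f (x - ((j : ℝ) * lam) • u) := by
      rw [map_sub, _root_.map_smul, hfu, smul_eq_mul]
    rw [h1]
    calc |f (x - ((j : ℝ) * lam) • u)| ≤ N1 * ‖x - ((j : ℝ) * lam) • u‖ := hfle _
      _ < N1 * (lam / 2) := mul_lt_mul_of_pos_left hcen hN1pos
  have hjj : ∀ {j j' : ℕ} {c : ℝ}, |c - (j : ℝ) * lam * N1| < N1 * (lam / 2) →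
      |c - (j' : ℝ) * lam * N1| < N1 * (lam / 2) → j = j' := by
    intro j j' c h1 h2
    by_contra hne
    have hge : (1 : ℝ) ≤ |(j : ℝ) - (j' : ℝ)| := by
      have hz : ((j : ℤ)) ≠ ((j' : ℤ)) := by exact_mod_cast hne
      have h3 : (1 : ℤ) ≤ |(j : ℤ) - (j' : ℤ)| := Int.one_le_abs (sub_ne_zero.mpr hz)
      have h4 : (1:ℝ) ≤ |((j:ℤ):ℝ) - ((j':ℤ):ℝ)| := by
        rw [← Int.cast_sub, ← Int.cast_abs]
        exact_mod_cast h3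
      simpa using h4
    have hd1 : |(j:ℝ) * lam * N1 - (j':ℝ) * lam * N1| < N1 * lam := by
      calc |(j:ℝ) * lam * N1 - (j':ℝ) * lam * N1|
          ≤ |(j:ℝ) * lam * N1 - c| + |c - (j':ℝ) * lam * N1| := abs_sub_le _ _ _
        _ < N1 * (lam / 2) + N1 * (lam / 2) := by
            rw [abs_sub_comm ((j:ℝ) * lam * N1) c]
            exact add_lt_add h1 h2
        _ = N1 * lam := by ring
    have heq : |(j:ℝ) * lam * N1 - (j':ℝ) * lam * N1| = |(j:ℝ) - (j':ℝ)| * (lam * N1) := by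
      rw [show (j:ℝ) * lam * N1 - (j':ℝ) * lam * N1 = ((j:ℝ) - (j':ℝ)) * (lam * N1) by ring]
      rw [abs_mul, abs_of_pos (by positivity : (0:ℝ) < lam * N1)]
    rw [heq] at hd1
    have h6 : lam * N1 ≤ |(j:ℝ) - (j':ℝ)| * (lam * N1) :=
      le_mul_of_one_le_left (mul_pos hlam hN1pos).le hge
    linarith
  set A : Set (Fin d → ℝ) := ⋃ j ∈ Finset.range k, box j with hA_def
  have hmemA : ∀ a ∈ A, ∃ j : ℕ, j < k ∧ a ∈ box j := by
    intro a ha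
    rw [hA_def] at ha
    simp only [Set.mem_iUnion, Finset.mem_range] at ha
    obtain ⟨j, hj, haj⟩ := ha
    exact ⟨j, hj, haj⟩
  have hboxmeas : ∀ j : ℕ, MeasurableSet (box j) := by
    intro j
    rw [hbox_def]
    exact MeasurableSet.univ_pi (fun i => measurableSet_Ioo)
  have hnormdiff : ∀ a ∈ A, ∀ b ∈ A, ‖a - b‖ < (k : ℝ) * lam := by
    intro a ha b hb
    obtain ⟨j, hj, haj⟩ := hmemA a ha
    obtain ⟨j', hj', hbj⟩ := hmemA b hb
    rw [pi_norm_lt_iff (by positivity : (0:ℝ) < (k:ℝ) * lam)]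
    intro i
    have h1 := (hbox_mem j a).mp haj i
    have h2 := (hbox_mem j' b).mp hbj i
    have hj1 : (j:ℝ) + 1 ≤ (k:ℝ) := by exact_mod_cast Nat.succ_le_of_lt hj
    have hj2 : (j':ℝ) + 1 ≤ (k:ℝ) := by exact_mod_cast Nat.succ_le_of_lt hj'
    have hj0 : (0:ℝ) ≤ (j:ℝ) := Nat.cast_nonneg j
    have hj0' : (0:ℝ) ≤ (j':ℝ) := Nat.cast_nonneg j'
    have hjk : |(j:ℝ) - (j':ℝ)| ≤ (k:ℝ) - 1 := by
      rw [abs_sub_le_iff]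
      constructor <;> linarith
    have ht : a i - b i = (a i - (j:ℝ) * lam * u i) - (b i - (j':ℝ) * lam * u i)
        + ((j:ℝ) - (j':ℝ)) * (lam * u i) := by ring
    have hbd : |a i - b i| ≤ |a i - (j:ℝ) * lam * u i| + |b i - (j':ℝ) * lam * u i|
        + |(j:ℝ) - (j':ℝ)| * (lam * 1) := by
      rw [ht]
      calc |(a i - (j:ℝ) * lam * u i) - (b i - (j':ℝ) * lam * u i)
            + ((j:ℝ) - (j':ℝ)) * (lam * u i)|
          ≤ |(a i - (j:ℝ) * lam * u i) - (b i - (j':ℝ) * lam * u i)|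
            + |((j:ℝ) - (j':ℝ)) * (lam * u i)| := abs_add_le _ _
        _ ≤ (|a i - (j:ℝ) * lam * u i| + |b i - (j':ℝ) * lam * u i|)
            + |(j:ℝ) - (j':ℝ)| * (lam * 1) := by
            refine add_le_add (abs_sub _ _) ?_
            rw [abs_mul, abs_mul, abs_of_pos hlam, huabs i]
    rw [Real.norm_eq_abs, Pi.sub_apply]
    have : |(j:ℝ) - (j':ℝ)| * (lam * 1) ≤ ((k:ℝ) - 1) * lam := by
      rw [mul_one]
      exact mul_le_mul_of_nonneg_right hjk hlam.le
    calc |a i - b i| ≤ |a i - (j:ℝ) * lam * u i| + |b i - (j':ℝ) * lam * u i|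
          + |(j:ℝ) - (j':ℝ)| * (lam * 1) := hbd
      _ < lam / 2 + lam / 2 + ((k:ℝ) - 1) * lam := by
          refine add_lt_add_of_lt_of_le (add_lt_add h1 h2) this
      _ = (k:ℝ) * lam := by ring
  have hinjA : ∀ a ∈ A, ∀ b ∈ A, a - b ∈ lattPt T → a = b := by
    intro a ha b hb hlatt
    obtain ⟨j, hj, haj⟩ := hmemA a ha
    obtain ⟨j', hj', hbj⟩ := hmemA b hb
    have hfz : f (a - b) = 0 := hvan _ hlatt (hnormdiff a ha b hb)
    have hfab : f a = f b := by
      have := map_sub f a b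
      rw [hfz] at this  -- 0 = f a - f b? direction: f (a-b) = f a - f b; rewrite
      linarith [this.symm]
    have hjeq : j = j' := by
      refine hjj (hwin j a haj) ?_
      rw [hfab]
      exact hwin j' b hbj
    subst hjeq
    have hab : ‖a - b‖ < lam := by
      rw [pi_norm_lt_iff hlam]
      intro i
      have h1 := (hbox_mem j a).mp haj i
      have h2 := (hbox_mem j b).mp hbj i
      rw [Real.norm_eq_abs, Pi.sub_apply]
      calc |a i - b i| = |(a i - (j:ℝ) * lam * u i) - (b i - (j:ℝ) * lam * u i)| := by ring_nf
        _ ≤ |a i - (j:ℝ) * lam * u i| + |b i - (j:ℝ) * lam * u i| := abs_sub _ _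
        _ < lam / 2 + lam / 2 := add_lt_add h1 h2
        _ = lam := by ring
    have := hsmall _ hlatt hab
    exact sub_eq_zero.mp this
  have hdisj : (↑(Finset.range k) : Set ℕ).PairwiseDisjoint box := by
    intro j hj j' hj' hne
    refine Set.disjoint_left.mpr (fun z hz hz' => ?_)
    exact hne (hjj (hwin j z hz) (hwin j' z hz'))
  have hvolA : volume A = ENNReal.ofReal ((k : ℝ) * lam ^ d) := by
    rw [hA_def]
    rw [measure_biUnion_finset hdisj (fun j _ => hboxmeas j)]
    have hboxvol : ∀ j : ℕ, volume (box j) = ENNReal.ofReal (lam ^ d) := by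
      intro j
      rw [hbox_def]
      rw [volume_pi_pi]
      have hIoo : ∀ i : Fin d, volume (Set.Ioo ((j : ℝ) * lam * u i - lam / 2)
          ((j : ℝ) * lam * u i + lam / 2)) = ENNReal.ofReal lam := by
        intro i; rw [Real.volume_Ioo]; congr 1; ring
      simp_rw [hIoo]
      rw [Finset.prod_const, Finset.card_univ, Fintype.card_fin,
        ← ENNReal.ofReal_pow hlam.le]
    simp_rw [hboxvol]
    rw [Finset.sum_const, Finset.card_range, nsmul_eq_mul,
      ENNReal.ofReal_mul (by positivity : (0:ℝ) ≤ (k:ℝ))]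
    congr 1
    exact (ENNReal.ofReal_natCast k).symm
  exact ⟨A, (Finset.range k).measurableSet_biUnion (fun j _ => hboxmeas j), hvolA,
    hnormdiff, hinjA⟩


private theorem det_ge_stack {T : Matrix (Fin d) (Fin d) ℝ} (hdet : T.det ≠ 0)
    (lam : ℝ) (hlam : 0 < lam) (k : ℕ) (hk : 1 ≤ k)
    (hsmall : ∀ w ∈ lattPt T, ‖w‖ < lam → w = 0)
    (f : (Fin d → ℝ) →ₗ[ℝ] ℝ) (hf : f ≠ 0)
    (hvan : ∀ w ∈ lattPt T, ‖w‖ < (k : ℝ) * lam → f w = 0) :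
    (k : ℝ) * lam ^ d ≤ |T.det| := by
  obtain ⟨A, hmeas, hvol, _, hinj⟩ := stack_packing lam hlam k hk hsmall f hf hvan
  have h := volume_le_of_packing hdet hmeas hinj
  rw [hvol] at h
  exact (ENNReal.ofReal_le_ofReal_iff (abs_nonneg _)).mp h

private theorem det_ge_stack_hole {T : Matrix (Fin d) (Fin d) ℝ} (hdet : T.det ≠ 0)
    (lam : ℝ) (hlam : 0 < lam) (k : ℕ) (hk : 1 ≤ k)
    (hsmall : ∀ w ∈ lattPt T, ‖w‖ < lam → w = 0)
    (f : (Fin d → ℝ) →ₗ[ℝ] ℝ) (hf : f ≠ 0)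
    (hvan : ∀ w ∈ lattPt T, ‖w‖ < (k : ℝ) * lam → f w = 0)
    (x : Fin d → ℝ) (hx : ∀ w ∈ lattPt T, (k : ℝ) * lam < dist x w) :
    2 * ((k : ℝ) * lam ^ d) ≤ |T.det| := by
  obtain ⟨A, hmeas, hvol, hdiff, hinj⟩ := stack_packing lam hlam k hk hsmall f hf hvan
  have h0latt : (0 : Fin d → ℝ) ∈ lattPt T := (lattMod T).zero_mem
  set Aimg : Set (Fin d → ℝ) := (fun z => -x + z) ⁻¹' A with hAimg_def
  have hmemimg : ∀ z, z ∈ Aimg ↔ -x + z ∈ A := fun z => Iff.rfl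
  have himgmeas : MeasurableSet Aimg := hmeas.preimage (measurable_id.const_add (-x))
  have himgvol : volume Aimg = volume A := by
    rw [hAimg_def]
    exact measure_preimage_add volume (-x) A
  have hdisj : Disjoint A Aimg := by
    refine Set.disjoint_left.mpr (fun z hz hz' => ?_)
    have ha : -x + z ∈ A := hz'
    have hzd : ‖z - (-x + z)‖ < (k : ℝ) * lam := hdiff z hz _ ha
    have hzx : z - (-x + z) = x := by abel
    rw [hzx] at hzd
    have := hx 0 h0latt
    rw [dist_eq_norm, sub_zero] at this
    linarith
  have hinj' : ∀ a ∈ A ∪ Aimg, ∀ b ∈ A ∪ Aimg, a - b ∈ lattPt T → a = b := by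
    rintro a (ha | ha) b (hb | hb) hlatt
    · exact hinj a ha b hb hlatt
    · -- a ∈ A, b = x + b', b' ∈ A
      exfalso
      have hb' : -x + b ∈ A := hb
      have hnw : -(a - b) ∈ lattPt T := Submodule.neg_mem (lattMod T) hlatt
      have := hx _ hnw
      rw [dist_eq_norm] at this
      have heq : x - -(a - b) = a - (-x + b) := by abel
      rw [heq] at this
      have := hdiff a ha _ hb'
      linarith
    · exfalso
      have ha' : -x + a ∈ A := ha
      have := hx _ hlatt
      rw [dist_eq_norm] at this
      have heq : x - (a - b) = b - (-x + a) := by abel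
      rw [heq] at this
      have := hdiff b hb _ ha'
      linarith
    · have ha' : -x + a ∈ A := ha
      have hb' : -x + b ∈ A := hb
      have heq : (-x + a) - (-x + b) = a - b := by abel
      have := hinj _ ha' _ hb' (by rw [heq]; exact hlatt)
      have h2 : a = b := by
        have h3 := congrArg (fun z => x + z) this
        simpa using h3
      exact h2
  have hvol' : volume (A ∪ Aimg) = ENNReal.ofReal (2 * ((k : ℝ) * lam ^ d)) := by
    rw [measure_union hdisj himgmeas, himgvol, hvol, ← two_mul]
    rw [ENNReal.ofReal_mul (by norm_num : (0:ℝ) ≤ 2)]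
    congr 1
    norm_num
  have h := volume_le_of_packing hdet (hmeas.union himgmeas) hinj'
  rw [hvol'] at h
  exact (ENNReal.ofReal_le_ofReal_iff (abs_nonneg _)).mp h

private theorem exists_ann (W : Submodule ℝ (Fin d → ℝ)) (hW : W ≠ ⊤) :
    ∃ f : (Fin d → ℝ) →ₗ[ℝ] ℝ, f ≠ 0 ∧ ∀ w ∈ W, f w = 0 := by
  haveI : Nontrivial ((Fin d → ℝ) ⧸ W) :=
    Submodule.Quotient.nontrivial_iff.mpr hW
  obtain ⟨q, hq⟩ := exists_ne (0 : (Fin d → ℝ) ⧸ W)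
  have hφex : ∃ φ : Module.Dual ℝ ((Fin d → ℝ) ⧸ W), φ q ≠ 0 := by
    by_contra h
    push_neg at h
    exact hq ((Module.forall_dual_apply_eq_zero_iff ℝ q).mp h)
  obtain ⟨φ, hφ⟩ := hφex
  refine ⟨φ.comp W.mkQ, ?_, ?_⟩
  · intro h0
    obtain ⟨z, rfl⟩ := Submodule.mkQ_surjective W q
    exact hφ (by simpa using LinearMap.congr_fun h0 z)
  · intro w hw
    have hz : W.mkQ w = 0 := (Submodule.Quotient.mk_eq_zero W).mpr hw
    simp [LinearMap.comp_apply, hz]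

private theorem cover_bound {T : Matrix (Fin d) (Fin d) ℝ}
    (B : Module.Basis (Fin d) ℝ (Fin d → ℝ)) (c : ℝ)
    (hmem : ∀ i, B i ∈ lattPt T) (hnorm : ∀ i, ‖B i‖ ≤ c) (x : Fin d → ℝ) :
    ∃ y ∈ lattPt T, ‖x - y‖ ≤ (d : ℝ) * c / 2 := by
  classical
  obtain ⟨r, hr⟩ : ∃ r : Fin d → ℝ, r = fun i => B.repr x i := ⟨_, rfl⟩
  refine ⟨∑ i, ((round (r i) : ℤ) : ℝ) • B i, ?_, ?_⟩
  · refine Submodule.sum_mem (lattMod T) (fun i _ => ?_)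
    rw [Int.cast_smul_eq_zsmul ℝ]
    exact Submodule.smul_mem _ _ (hmem i)
  have hxr : x = ∑ i, r i • B i := by
    rw [hr]
    exact (B.sum_repr x).symm
  have hxy : x - ∑ i, ((round (r i) : ℤ) : ℝ) • B i
      = ∑ i, (r i - ((round (r i) : ℤ) : ℝ)) • B i := by
    conv_lhs => rw [hxr]
    rw [← Finset.sum_sub_distrib]
    refine Finset.sum_congr rfl (fun i _ => ?_)
    rw [sub_smul]
  rw [hxy]
  calc ‖∑ i, (r i - ((round (r i) : ℤ) : ℝ)) • B i‖
      ≤ ∑ i, ‖(r i - ((round (r i) : ℤ) : ℝ)) • B i‖ := norm_sum_le _ _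
    _ ≤ ∑ _i : Fin d, (1/2) * c := by
        refine Finset.sum_le_sum (fun i _ => ?_)
        rw [norm_smul, Real.norm_eq_abs]
        refine mul_le_mul (abs_sub_round (r i)) (hnorm i) (norm_nonneg _) (by norm_num)
    _ = (d : ℝ) * c / 2 := by
        rw [Finset.sum_const, Finset.card_univ, Fintype.card_fin, nsmul_eq_mul]; ring

private theorem cov_le {T : Matrix (Fin d) (Fin d) ℝ} (c : ℝ) (hc : 0 ≤ c)
    (h : ∀ x : Fin d → ℝ, ∃ y ∈ lattPt T, ‖x - y‖ ≤ c) :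
    covRadInf (lattPt T) Set.univ ≤ c := by
  refine Real.iSup_le (fun x => ?_) hc
  obtain ⟨y, hy, hxy⟩ := h (x : Fin d → ℝ)
  refine ciInf_le_of_le ⟨0, by rintro r ⟨y', rfl⟩; exact dist_nonneg⟩
    (⟨y, hy⟩ : (lattPt T)) ?_
  rw [dist_eq_norm]
  exact hxy

private theorem exists_hole {T : Matrix (Fin d) (Fin d) ℝ} (c : ℝ) (hc : 0 ≤ c)
    (hcov : ¬ covRadInf (lattPt T) Set.univ ≤ c) :
    ∃ x : Fin d → ℝ, ∀ w ∈ lattPt T, c < dist x w := by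
  by_contra h
  push_neg at h
  apply hcov
  refine Real.iSup_le (fun x => ?_) hc
  obtain ⟨w, hw, hwd⟩ := h (x : Fin d → ℝ)
  exact ciInf_le_of_le ⟨0, by rintro r ⟨y', rfl⟩; exact dist_nonneg⟩
    (⟨w, hw⟩ : (lattPt T)) hwd


private theorem single_cast (i : Fin d) :
    (fun j => (((Pi.single i 1 : Fin d → ℤ)) j : ℝ)) = (Pi.single i 1 : Fin d → ℝ) := by
  funext j
  by_cases h : j = i <;> simp [Pi.single_apply, h]

private theorem col_mem_latt (T : Matrix (Fin d) (Fin d) ℝ) (i : Fin d) :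
    T.mulVec (Pi.single i 1) ∈ lattPt T :=
  ⟨Pi.single i 1, by rw [single_cast i]⟩

private theorem mulVec_inj {T : Matrix (Fin d) (Fin d) ℝ} (hdet : T.det ≠ 0)
    {v : Fin d → ℝ} (h : T.mulVec v = 0) : v = 0 := by
  haveI : Invertible T := T.invertibleOfIsUnitDet (isUnit_iff_ne_zero.mpr hdet)
  have h1 : (⅟T).mulVec (T.mulVec v) = v := by
    rw [Matrix.mulVec_mulVec, invOf_mul_self, Matrix.one_mulVec]
  rw [h, Matrix.mulVec_zero] at h1
  exact h1.symm

private theorem mulVec_surj {T : Matrix (Fin d) (Fin d) ℝ} (hdet : T.det ≠ 0)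
    (x : Fin d → ℝ) : ∃ v, T.mulVec v = x := by
  haveI : Invertible T := T.invertibleOfIsUnitDet (isUnit_iff_ne_zero.mpr hdet)
  exact ⟨(⅟T).mulVec x, by rw [Matrix.mulVec_mulVec, mul_invOf_self, Matrix.one_mulVec]⟩

private theorem mulVec_expand (T : Matrix (Fin d) (Fin d) ℝ) (v : Fin d → ℝ) :
    T.mulVec v = ∑ i, v i • T.mulVec (Pi.single i 1) := by
  classical
  have h1 : v = ∑ i, v i • (Pi.single i 1 : Fin d → ℝ) := by
    funext j
    rw [Finset.sum_apply]
    simp [Pi.single_apply]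
  conv_lhs => rw [h1]
  rw [show T.mulVec (∑ i, v i • (Pi.single i 1 : Fin d → ℝ))
        = T.mulVecLin (∑ i, v i • (Pi.single i 1 : Fin d → ℝ)) from rfl]
  rw [map_sum]
  refine Finset.sum_congr rfl (fun i _ => ?_)
  rw [_root_.map_smul, Matrix.mulVecLin_apply]

end MeshAux

set_option maxHeartbeats 2000000 in
/-- If `X = T(ℤ^d)` is a lattice with `λ₁^(∞) ≥ C (det T)^{1/d}` for some `C > 0`,
then the mesh ratio satisfies `ρ_∞(X; ℝ^d) = h_∞(X; ℝ^d)/q_∞(X; ℝ^d) ≤ d / C^d`. -/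
theorem mesh_ratio_le_of_first_succMin_ge
    (d : ℕ) (hd : 1 ≤ d) (T : Matrix (Fin d) (Fin d) ℝ) (hdet : 0 < T.det)
    (C : ℝ) (hC : 0 < C)
    (hmin : succMinInf (lattPt T) 1 ≥ C * T.det ^ ((1 : ℝ) / d)) :
    covRadInf (lattPt T) Set.univ / sepRadInf (lattPt T) ≤ (d : ℝ) / C ^ d := by
  classical
  obtain ⟨d', rfl⟩ : ∃ d', d = d' + 1 := ⟨d - 1, by omega⟩
  have hdet' : T.det ≠ 0 := ne_of_gt hdet
  have habs : |T.det| = T.det := abs_of_pos hdet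
  set lam := succMinInf (lattPt T) 1 with hlam_def
  have hDpow : (0:ℝ) < T.det ^ ((1:ℝ) / ((d'+1 : ℕ) : ℝ)) := Real.rpow_pos_of_pos hdet _
  have hlam_pos : 0 < lam := lt_of_lt_of_le (mul_pos hC hDpow) hmin
  -- the minimality property of lam
  have hlam_le : ∀ w ∈ lattPt T, w ≠ 0 → lam ≤ ‖w‖ := by
    intro w hw hw0
    rw [hlam_def, succMinInf]
    refine csInf_le ⟨0, ?_⟩ ?_
    · rintro l ⟨hl, -⟩; exact hl.le
    · refine ⟨norm_pos_iff.mpr hw0, fun _ => w, fun _ => ⟨hw, le_rfl⟩, ?_⟩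
      exact (linearIndependent_unique_iff (v := fun _ : Fin 1 => w)).mpr hw0
  have hsmall : ∀ w ∈ lattPt T, ‖w‖ < lam → w = 0 := by
    intro w hw hlt
    by_contra h0
    exact absurd (hlam_le w hw h0) (not_le.mpr hlt)
  have h0latt : (0 : Fin (d'+1) → ℝ) ∈ lattPt T := (lattMod T).zero_mem
  have hcol0 : T.mulVec (Pi.single (0 : Fin (d'+1)) 1) ≠ 0 := by
    intro h0
    have := mulVec_inj hdet' h0
    have h1 := congrFun this 0
    simp [Pi.single_apply] at h1
  -- separation bound
  have hsep : lam / 2 ≤ sepRadInf (lattPt T) := by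
    rw [sepRadInf]
    have hlow : lam ≤ sInf {r : ℝ | ∃ x ∈ lattPt T, ∃ y ∈ lattPt T, x ≠ y ∧ r = dist x y} := by
      refine le_csInf ⟨dist (T.mulVec (Pi.single (0 : Fin (d'+1)) 1)) 0,
        T.mulVec (Pi.single (0 : Fin (d'+1)) 1), col_mem_latt T 0, 0, h0latt, hcol0, rfl⟩ ?_
      rintro r ⟨a, ha, b, hb, hab, rfl⟩
      rw [dist_eq_norm]
      exact hlam_le _ (Submodule.sub_mem (lattMod T) ha hb) (sub_ne_zero.mpr hab)
    linarith
  have hsep_pos : 0 < sepRadInf (lattPt T) := lt_of_lt_of_le (by positivity) hsep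
  have hcov0 : 0 ≤ covRadInf (lattPt T) Set.univ :=
    Real.iSup_nonneg (fun x => Real.iInf_nonneg (fun y => dist_nonneg))
  -- the predicate P
  set P : ℕ → Prop := fun k => ∃ f : (Fin (d'+1) → ℝ) →ₗ[ℝ] ℝ, f ≠ 0 ∧
      ∀ w ∈ lattPt T, ‖w‖ < (k : ℝ) * lam → f w = 0 with hP_def
  have hP1 : P 1 := by
    refine ⟨LinearMap.proj 0, ?_, ?_⟩
    · intro h0
      have h1 := LinearMap.congr_fun h0 (Pi.single (0 : Fin (d'+1)) 1)
      simp [LinearMap.proj_apply] at h1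
    · intro w hw hlt
      rw [Nat.cast_one, one_mul] at hlt
      rw [hsmall w hw hlt]
      simp
  -- a bound N with ¬ P N
  set Bsum : ℝ := (∑ i, ‖T.mulVec (Pi.single (i : Fin (d'+1)) 1)‖) + 1 with hBsum_def
  have hBsum_pos : 0 < Bsum := by
    rw [hBsum_def]
    have : (0:ℝ) ≤ ∑ i, ‖T.mulVec (Pi.single (i : Fin (d'+1)) 1)‖ :=
      Finset.sum_nonneg (fun i _ => norm_nonneg _)
    linarith
  obtain ⟨N, hN⟩ := exists_nat_gt (Bsum / lam)
  have hN1 : 1 ≤ N := by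
    by_contra h
    push_neg at h
    interval_cases N
    · simp at hN
      have : Bsum / lam > 0 := div_pos hBsum_pos hlam_pos
      linarith
  have hNlam : Bsum < (N : ℝ) * lam := by
    rw [div_lt_iff₀ hlam_pos] at hN
    linarith
  have hNP : ¬ P N := by
    rintro ⟨f, hf0, hfv⟩
    apply hf0
    refine LinearMap.ext (fun x => ?_)
    obtain ⟨v, rfl⟩ := mulVec_surj hdet' x
    rw [mulVec_expand, map_sum]
    have hz : ∀ i : Fin (d'+1), f (T.mulVec (Pi.single i 1)) = 0 := by
      intro i
      refine hfv _ (col_mem_latt T i) ?_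
      have h1 : ‖T.mulVec (Pi.single i 1)‖ ≤ ∑ j, ‖T.mulVec (Pi.single (j : Fin (d'+1)) 1)‖ :=
        Finset.single_le_sum (f := fun j : Fin (d'+1) => ‖T.mulVec (Pi.single j (1:ℝ))‖)
          (fun j _ => norm_nonneg _) (Finset.mem_univ i)
      rw [hBsum_def] at hNlam
      linarith
    simp only [_root_.map_smul, hz, smul_eq_mul, mul_zero]
    simp
  -- the greatest k with P k
  set K := Nat.findGreatest P N with hK_def
  have hPK : P K := Nat.findGreatest_spec hN1 hP1
  have hK1 : 1 ≤ K := Nat.le_findGreatest hN1 hP1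
  have hKN : K < N := lt_of_le_of_ne (Nat.findGreatest_le N) (fun h => hNP (h ▸ hPK))
  have hnotPK1 : ¬ P (K + 1) := Nat.findGreatest_is_greatest (Nat.lt_succ_self K) hKN
  obtain ⟨f, hf0, hfvan⟩ := hPK
  have hK1R : (1:ℝ) ≤ (K:ℝ) := by exact_mod_cast hK1
  -- F1 : stacking bound
  have hF1 : (K:ℝ) * lam ^ (d'+1) ≤ T.det := by
    rw [← habs]
    exact det_ge_stack hdet' lam hlam_pos K hK1 hsmall f hf0 hfvan
  -- spanning set at level K+1 gives a basis of short lattice vectors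
  set SS : Set (Fin (d'+1) → ℝ) := {w | w ∈ lattPt T ∧ ‖w‖ < ((K+1 : ℕ):ℝ) * lam}
    with hSS_def
  have hSSspan : Submodule.span ℝ SS = ⊤ := by
    by_contra hne
    obtain ⟨g, hg0, hgv⟩ := exists_ann _ hne
    exact hnotPK1 ⟨g, hg0, fun w hw hwn => hgv w (Submodule.subset_span ⟨hw, hwn⟩)⟩
  obtain ⟨bs, hbs_sub, hbs_span, hbs_ind⟩ := exists_linearIndependent ℝ SS
  have hbs_fin : bs.Finite := hbs_ind.setFinite
  haveI := hbs_fin.fintype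
  have hspan_top : ⊤ ≤ Submodule.span ℝ (Set.range ((↑) : bs → (Fin (d'+1) → ℝ))) := by
    rw [Subtype.range_coe, hbs_span, hSSspan]
  set B0 : Module.Basis bs ℝ (Fin (d'+1) → ℝ) := Module.Basis.mk hbs_ind hspan_top with hB0_def
  have hcard : Fintype.card bs = d' + 1 := by
    have h1 := Module.finrank_eq_card_basis B0
    rw [Module.finrank_fin_fun] at h1
    omega
  set B : Module.Basis (Fin (d'+1)) ℝ (Fin (d'+1) → ℝ) :=
    B0.reindex (Fintype.equivFinOfCardEq hcard) with hB_def
  have hBmem : ∀ i, B i ∈ lattPt T ∧ ‖B i‖ < ((K+1 : ℕ):ℝ) * lam := by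
    intro i
    have h1 : B i = B0 ((Fintype.equivFinOfCardEq hcard).symm i) := B0.reindex_apply _ _
    have h2 : B0 ((Fintype.equivFinOfCardEq hcard).symm i)
        = (((Fintype.equivFinOfCardEq hcard).symm i : bs) : Fin (d'+1) → ℝ) := by
      rw [hB0_def, Module.Basis.mk_apply]
    have h3 : (((Fintype.equivFinOfCardEq hcard).symm i : bs) : Fin (d'+1) → ℝ) ∈ SS :=
      hbs_sub (Subtype.mem _)
    rw [h1, h2]
    exact h3
  have hcov_trans : covRadInf (lattPt T) Set.univ
      ≤ ((d'+1 : ℕ):ℝ) * (((K+1 : ℕ):ℝ) * lam) / 2 := by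
    refine cov_le _ (by positivity) (fun x => ?_)
    exact cover_bound B (((K+1 : ℕ):ℝ) * lam) (fun i => (hBmem i).1)
      (fun i => (hBmem i).2.le) x
  -- the key inequality
  have hKEY : 2 * covRadInf (lattPt T) Set.univ * lam ^ d' ≤ ((d'+1 : ℕ):ℝ) * T.det := by
    rcases Nat.eq_zero_or_pos d' with hd0 | hdpos
    · subst hd0
      have hcovlam : covRadInf (lattPt T) Set.univ ≤ lam / 2 := by
        refine le_of_forall_pos_le_add (fun ε hε => ?_)
        have hSne : {l : ℝ | 0 < l ∧ ∃ v : Fin 1 → (Fin (0+1) → ℝ),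
            (∀ j, v j ∈ lattPt T ∧ ‖v j‖ ≤ l) ∧ LinearIndependent ℝ v}.Nonempty := by
          refine ⟨‖T.mulVec (Pi.single (0 : Fin (0+1)) 1)‖, norm_pos_iff.mpr hcol0,
            fun _ => T.mulVec (Pi.single (0 : Fin (0+1)) 1),
            fun _ => ⟨col_mem_latt T 0, le_rfl⟩, ?_⟩
          exact (linearIndependent_unique_iff).mpr hcol0
        have hbdd : BddBelow {l : ℝ | 0 < l ∧ ∃ v : Fin 1 → (Fin (0+1) → ℝ),
            (∀ j, v j ∈ lattPt T ∧ ‖v j‖ ≤ l) ∧ LinearIndependent ℝ v} :=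
          ⟨0, fun l hl => hl.1.le⟩
        have hlam_eq : lam = sInf {l : ℝ | 0 < l ∧ ∃ v : Fin 1 → (Fin (0+1) → ℝ),
            (∀ j, v j ∈ lattPt T ∧ ‖v j‖ ≤ l) ∧ LinearIndependent ℝ v} := by
          rw [hlam_def, succMinInf]
        have hlt : sInf {l : ℝ | 0 < l ∧ ∃ v : Fin 1 → (Fin (0+1) → ℝ),
            (∀ j, v j ∈ lattPt T ∧ ‖v j‖ ≤ l) ∧ LinearIndependent ℝ v} < lam + 2*ε := by
          rw [← hlam_eq]
          linarith
        obtain ⟨l, hlmem, hllt⟩ := (csInf_lt_iff hbdd hSne).mp hlt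
        obtain ⟨hlpos, v, hv, hvind⟩ := hlmem
        have hcardB : Fintype.card (Fin 1) = Module.finrank ℝ (Fin (0+1) → ℝ) := by
          rw [Module.finrank_fin_fun, Fintype.card_fin]
        set B1 : Module.Basis (Fin 1) ℝ (Fin (0+1) → ℝ) :=
          basisOfLinearIndependentOfCardEqFinrank hvind hcardB with hB1_def
        have hB1 : ∀ i, B1 i = v i := by
          intro i
          rw [hB1_def, coe_basisOfLinearIndependentOfCardEqFinrank]
        have hcb := cov_le (T := T) ((1:ℝ) * l / 2) (by positivity) (fun x => ?_)
        · calc covRadInf (lattPt T) Set.univ ≤ (1:ℝ) * l / 2 := hcb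
            _ ≤ lam / 2 + ε := by nlinarith
        · obtain ⟨y, hy, hxy⟩ := cover_bound B1 l
            (fun i => by rw [hB1 i]; exact (hv i).1)
            (fun i => by rw [hB1 i]; exact (hv i).2) x
          refine ⟨y, hy, ?_⟩
          have : ((0+1 : ℕ):ℝ) = (1:ℝ) := by norm_num
          rw [this] at hxy
          exact hxy
      have hlamdet : lam ≤ T.det := by
        have h2 : lam ≤ (K:ℝ) * lam := le_mul_of_one_le_left hlam_pos.le hK1R
        have h3 : (K:ℝ) * lam ^ (0+1) = (K:ℝ) * lam := by norm_num
        rw [h3] at hF1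
        linarith
      have : ((0+1 : ℕ):ℝ) = (1:ℝ) := by norm_num
      rw [this, pow_zero]
      nlinarith
    · -- d ≥ 2
      have hd2 : (2:ℝ) ≤ ((d'+1 : ℕ):ℝ) := by exact_mod_cast (by omega : 2 ≤ d'+1)
      by_cases hcase : covRadInf (lattPt T) Set.univ ≤ (K:ℝ) * lam
      · have h1 : 2 * covRadInf (lattPt T) Set.univ * lam ^ d'
            ≤ 2 * ((K:ℝ) * lam ^ (d'+1)) := by
          have h2 := mul_le_mul_of_nonneg_right hcase (pow_nonneg hlam_pos.le d')
          have h3 : (K:ℝ) * lam * lam ^ d' = (K:ℝ) * lam ^ (d'+1) := by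
            rw [pow_succ]; ring
          nlinarith
        have h4 : 2 * T.det ≤ ((d'+1 : ℕ):ℝ) * T.det := by nlinarith
        linarith
      · obtain ⟨x, hx⟩ := exists_hole ((K:ℝ)*lam) (by positivity) hcase
        have hF2 : 2 * ((K:ℝ) * lam ^ (d'+1)) ≤ T.det := by
          rw [← habs]
          exact det_ge_stack_hole hdet' lam hlam_pos K hK1 hsmall f hf0 hfvan x hx
        have h4 : 2 * covRadInf (lattPt T) Set.univ
            ≤ ((d'+1 : ℕ):ℝ) * (((K+1 : ℕ):ℝ) * lam) := by linarith
        have h5 : 2 * covRadInf (lattPt T) Set.univ * lam ^ d'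
            ≤ ((d'+1 : ℕ):ℝ) * (((K+1 : ℕ):ℝ) * lam) * lam ^ d' :=
          mul_le_mul_of_nonneg_right h4 (pow_nonneg hlam_pos.le d')
        have h6 : ((K+1 : ℕ):ℝ) ≤ 2*(K:ℝ) := by
          push_cast
          linarith
        have h7 : ((d'+1 : ℕ):ℝ) * (((K+1 : ℕ):ℝ) * lam) * lam ^ d'
            ≤ ((d'+1 : ℕ):ℝ) * (2 * ((K:ℝ) * lam ^ (d'+1))) := by
          have hpos : (0:ℝ) < lam * lam ^ d' := by positivity
          have h8 : ((K+1 : ℕ):ℝ) * (lam * lam ^ d') ≤ 2*(K:ℝ) * (lam * lam ^ d') :=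
            mul_le_mul_of_nonneg_right h6 hpos.le
          have h9 : lam * lam ^ d' = lam ^ (d'+1) := by rw [pow_succ]; ring
          rw [h9] at h8
          have h85 : ((d'+1 : ℕ):ℝ) * (((K+1 : ℕ):ℝ) * lam ^ (d'+1))
              ≤ ((d'+1 : ℕ):ℝ) * (2*(K:ℝ) * lam ^ (d'+1)) :=
            mul_le_mul_of_nonneg_left h8 (by positivity)
          calc ((d'+1 : ℕ):ℝ) * (((K+1 : ℕ):ℝ) * lam) * lam ^ d'
              = ((d'+1 : ℕ):ℝ) * (((K+1 : ℕ):ℝ) * lam ^ (d'+1)) := by rw [pow_succ]; ring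
            _ ≤ ((d'+1 : ℕ):ℝ) * (2*(K:ℝ) * lam ^ (d'+1)) := h85
            _ = ((d'+1 : ℕ):ℝ) * (2 * ((K:ℝ) * lam ^ (d'+1))) := by ring
        have h10 : ((d'+1 : ℕ):ℝ) * (2 * ((K:ℝ) * lam ^ (d'+1)))
            ≤ ((d'+1 : ℕ):ℝ) * T.det := by nlinarith
        linarith
  -- endgame
  have hstep1 : covRadInf (lattPt T) Set.univ / sepRadInf (lattPt T)
      ≤ covRadInf (lattPt T) Set.univ / (lam/2) := by
    gcongr
  have hstep2 : covRadInf (lattPt T) Set.univ / (lam/2)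
      = 2 * covRadInf (lattPt T) Set.univ / lam := by
    rw [div_div_eq_mul_div]
    ring
  have hstep3 : 2 * covRadInf (lattPt T) Set.univ / lam
      ≤ ((d'+1 : ℕ):ℝ) * T.det / lam ^ (d'+1) := by
    rw [div_le_div_iff₀ hlam_pos (pow_pos hlam_pos _)]
    calc 2 * covRadInf (lattPt T) Set.univ * lam ^ (d'+1)
        = (2 * covRadInf (lattPt T) Set.univ * lam ^ d') * lam := by rw [pow_succ]; ring
      _ ≤ (((d'+1 : ℕ):ℝ) * T.det) * lam := mul_le_mul_of_nonneg_right hKEY hlam_pos.le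
  have hstep4 : ((d'+1 : ℕ):ℝ) * T.det / lam ^ (d'+1) ≤ ((d'+1 : ℕ):ℝ) / C ^ (d'+1) := by
    have hCd : C ^ (d'+1) * T.det ≤ lam ^ (d'+1) := by
      have h1 : C * T.det ^ ((1:ℝ)/((d'+1 : ℕ):ℝ)) ≤ lam := hmin
      have h2 : (C * T.det ^ ((1:ℝ)/((d'+1 : ℕ):ℝ)))^(d'+1) ≤ lam^(d'+1) :=
        pow_le_pow_left₀ (by positivity) h1 _
      rw [mul_pow] at h2
      have h3 : (T.det ^ ((1:ℝ)/((d'+1 : ℕ):ℝ)))^(d'+1) = T.det := by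
        rw [← Real.rpow_natCast (T.det ^ ((1:ℝ)/((d'+1 : ℕ):ℝ))) (d'+1),
          ← Real.rpow_mul hdet.le, one_div,
          inv_mul_cancel₀ (by exact_mod_cast Nat.succ_ne_zero d' : ((d'+1 : ℕ):ℝ) ≠ 0),
          Real.rpow_one]
      rw [h3] at h2
      exact h2
    rw [div_le_div_iff₀ (pow_pos hlam_pos _) (pow_pos hC _)]
    calc ((d'+1 : ℕ):ℝ) * T.det * C^(d'+1) = ((d'+1 : ℕ):ℝ) * (C^(d'+1) * T.det) := by ring
      _ ≤ ((d'+1 : ℕ):ℝ) * lam^(d'+1) := by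
          refine mul_le_mul_of_nonneg_left hCd (by positivity)
  calc covRadInf (lattPt T) Set.univ / sepRadInf (lattPt T)
      ≤ covRadInf (lattPt T) Set.univ / (lam/2) := hstep1
    _ = 2 * covRadInf (lattPt T) Set.univ / lam := hstep2
    _ ≤ ((d'+1 : ℕ):ℝ) * T.det / lam ^ (d'+1) := hstep3
    _ ≤ ((d'+1 : ℕ):ℝ) / C ^ (d'+1) := hstep4
end

section
/- Let X = T(ℤ^d) be a lattice and P = X ∩ [0,1)^d with |P| ≥ 2. Then the covering radius of P in the ℓ_∞ norm satisfies h_∞(P) ≤ 2 h_∞(X; ℝ^d), where h_∞(P) = sup_{x ∈ [0,1]^d} min_{y ∈ P} ‖x − y‖_∞. -/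
/-- The part of the lattice lying in the half-open unit cube `[0,1)^d`. -/
def lattPtCube {d : ℕ} (T : Matrix (Fin d) (Fin d) ℝ) : Set (Fin d → ℝ) :=
  lattPt T ∩ {x | ∀ i, x i ∈ Set.Ico (0 : ℝ) 1}

lemma zero_mem_lattPt {d : ℕ} (T : Matrix (Fin d) (Fin d) ℝ) : (0 : Fin d → ℝ) ∈ lattPt T := by
  refine ⟨0, ?_⟩
  have h : (fun i => (((0 : Fin d → ℤ)) i : ℝ)) = (0 : Fin d → ℝ) := by ext i; simp
  rw [h, Matrix.mulVec_zero]

lemma zero_mem_lattPtCube {d : ℕ} (T : Matrix (Fin d) (Fin d) ℝ) :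
    (0 : Fin d → ℝ) ∈ lattPtCube T :=
  ⟨zero_mem_lattPt T, fun i => by simp⟩

/-- Let `X = T(ℤ^d)` be a lattice and `P = X ∩ [0,1)^d` with `|P| ≥ 2`. Then the covering
radius of `P` over `[0,1]^d` in the `ℓ_∞` norm satisfies `h_∞(P) ≤ 2 h_∞(X; ℝ^d)`. -/
theorem covRad_restriction_le
    (d : ℕ) (T : Matrix (Fin d) (Fin d) ℝ) (hT : IsUnit T.det)
    (hP : (lattPtCube T).Nontrivial) :
    covRadInf (lattPtCube T) (Set.Icc (0 : Fin d → ℝ) 1)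
      ≤ 2 * covRadInf (lattPt T) Set.univ := by
  classical
  set ρ : ℝ := covRadInf (lattPt T) Set.univ with hρdef
  have h0X : (0 : Fin d → ℝ) ∈ lattPt T := zero_mem_lattPt T
  have h0P : (0 : Fin d → ℝ) ∈ lattPtCube T := zero_mem_lattPtCube T
  haveI : Nonempty (lattPt T) := ⟨⟨0, h0X⟩⟩
  haveI : Nonempty (lattPtCube T) := ⟨⟨0, h0P⟩⟩
  haveI : Nonempty (Set.Icc (0 : Fin d → ℝ) 1) := ⟨⟨0, Set.left_mem_Icc.mpr zero_le_one⟩⟩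
  have bb : ∀ (x : Fin d → ℝ) (S : Set (Fin d → ℝ)),
      BddBelow (Set.range fun y : S => dist x (y : Fin d → ℝ)) := by
    intro x S
    refine ⟨0, ?_⟩
    rintro r ⟨y, rfl⟩
    exact dist_nonneg
  -- the inner infima over the full lattice are uniformly bounded above
  obtain ⟨C, hC⟩ : ∃ C, ∀ x : Fin d → ℝ,
      (⨅ y : lattPt T, dist x (y : Fin d → ℝ)) ≤ C := by
    set f := (Matrix.mulVecLin T).toContinuousLinearMap with hf
    refine ⟨‖f‖ * (1/2), fun x => ?_⟩
    set v : Fin d → ℝ := (T⁻¹).mulVec x with hv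
    set k : Fin d → ℤ := fun i => round (v i) with hk
    have hy : T.mulVec (fun i => (k i : ℝ)) ∈ lattPt T := ⟨k, rfl⟩
    refine ciInf_le_of_le (bb x _) ⟨_, hy⟩ ?_
    have hxv : T.mulVec v = x := by
      rw [hv, Matrix.mulVec_mulVec, Matrix.mul_nonsing_inv T hT, Matrix.one_mulVec]
    have hsub : x - T.mulVec (fun i => (k i : ℝ)) = f (v - fun i => (k i : ℝ)) := by
      rw [hf]
      simp only [LinearMap.coe_toContinuousLinearMap', Matrix.mulVecLin_apply]
      rw [Matrix.mulVec_sub, hxv]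
    have hvk : ‖v - fun i => (k i : ℝ)‖ ≤ 1/2 := by
      refine (pi_norm_le_iff_of_nonneg (by norm_num)).mpr fun i => ?_
      simp only [Pi.sub_apply, Real.norm_eq_abs]
      exact abs_sub_round (v i)
    calc dist x (T.mulVec fun i => (k i : ℝ)) = ‖f (v - fun i => (k i : ℝ))‖ := by
          rw [dist_eq_norm, hsub]
      _ ≤ ‖f‖ * ‖v - fun i => (k i : ℝ)‖ := f.le_opNorm _
      _ ≤ ‖f‖ * (1/2) := by
          exact mul_le_mul_of_nonneg_left hvk (norm_nonneg f)
  have hbdd : BddAbove (Set.range fun x : (Set.univ : Set (Fin d → ℝ)) =>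
      ⨅ y : lattPt T, dist (x : Fin d → ℝ) (y : Fin d → ℝ)) := by
    refine ⟨C, ?_⟩
    rintro r ⟨x, rfl⟩
    exact hC x
  have hρ0 : 0 ≤ ρ :=
    Real.iSup_nonneg fun x => Real.iInf_nonneg fun y => dist_nonneg
  have hinf_le : ∀ z : Fin d → ℝ, (⨅ y : lattPt T, dist z (y : Fin d → ℝ)) ≤ ρ := by
    intro z
    exact le_ciSup hbdd ⟨z, Set.mem_univ z⟩
  have main : ∀ x : Set.Icc (0 : Fin d → ℝ) 1,
      (⨅ y : lattPtCube T, dist (x : Fin d → ℝ) (y : Fin d → ℝ)) ≤ 2 * ρ := by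
    rintro ⟨x, hx⟩
    rcases le_or_gt (1/2) ρ with hhalf | hhalf
    · refine ciInf_le_of_le (bb x _) ⟨0, h0P⟩ ?_
      have hd : dist x (0 : Fin d → ℝ) ≤ 1 := by
        rw [dist_zero_right]
        refine (pi_norm_le_iff_of_nonneg zero_le_one).mpr fun i => ?_
        rw [Real.norm_eq_abs, abs_le]
        have h0 : (0:ℝ) ≤ x i := hx.1 i
        have h1 : x i ≤ (1:ℝ) := hx.2 i
        exact ⟨by linarith, h1⟩
      linarith
    · refine le_of_forall_pos_le_add fun ε hε => ?_
      set δ : ℝ := min (ε/3) ((1 - 2*ρ)/3) with hδdef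
      have hδ0 : 0 < δ := lt_min (by linarith) (by linarith)
      have hδ1 : 2*ρ + 3*δ ≤ 1 := by
        have h := min_le_right (ε/3) ((1 - 2*ρ)/3)
        rw [← hδdef] at h
        linarith
      have hδε : 3*δ ≤ ε := by
        have h := min_le_left (ε/3) ((1 - 2*ρ)/3)
        rw [← hδdef] at h
        linarith
      set a : ℝ := ρ + δ with ha
      set b : ℝ := 1 - ρ - 2*δ with hb
      have hab : a ≤ b := by rw [ha, hb]; linarith
      set x' : Fin d → ℝ := fun i => min (max (x i) a) b with hx'def
      have hax' : ∀ i, a ≤ x' i := fun i => le_min (le_max_right _ _) hab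
      have hx'b : ∀ i, x' i ≤ b := fun i => min_le_right _ _
      have hxx' : dist x x' ≤ ρ + 2*δ := by
        refine (dist_pi_le_iff (by linarith)).mpr fun i => ?_
        rw [Real.dist_eq, abs_le]
        have h0 : (0:ℝ) ≤ x i := hx.1 i
        have h1 : x i ≤ (1:ℝ) := hx.2 i
        constructor
        · have h2 : x' i ≤ max (x i) a := min_le_left _ _
          have h3 : max (x i) a ≤ x i + (ρ + δ) :=
            max_le (by linarith) (by rw [ha]; linarith)
          linarith
        · have h2 : min (x i) b ≤ x' i := min_le_min (le_max_left _ _) le_rfl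
          have h3 : x i - (ρ + 2*δ) ≤ min (x i) b :=
            le_min (by linarith) (by rw [hb]; linarith)
          linarith
      have hle : (⨅ y : lattPt T, dist x' (y : Fin d → ℝ)) < a := by
        have := hinf_le x'
        rw [ha]; linarith
      obtain ⟨⟨y, hyX⟩, hdy⟩ := exists_lt_of_ciInf_lt hle
      have hyP : y ∈ lattPtCube T := by
        refine ⟨hyX, fun i => ?_⟩
        have h := (dist_le_pi_dist x' y i).trans_lt hdy
        rw [Real.dist_eq] at h
        obtain ⟨h1, h2⟩ := abs_lt.mp h
        have hax := hax' i
        have hbx := hx'b i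
        constructor
        · linarith
        · have : y i < x' i + a := by linarith
          have hba : b + a = 1 - δ := by rw [ha, hb]; ring
          linarith
      refine ciInf_le_of_le (bb x _) ⟨y, hyP⟩ ?_
      have htri : dist x y ≤ dist x x' + dist x' y := dist_triangle _ _ _
      have haa : a = ρ + δ := ha
      linarith
  exact ciSup_le main
end

section
/- Let X = T(ℤ^d) be a lattice and P = X ∩ [0,1)^d with |P| ≥ 2. Then the mesh ratio of P satisfies ρ_∞(P) ≤ 2 ρ_∞(X; ℝ^d). -/
open Matrix Finset


/-- Row-sum bound on coordinates of a matrix-vector product. -/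
lemma aux_mulVec_abs_coord_le {d : ℕ} (M : Matrix (Fin d) (Fin d) ℝ) (v : Fin d → ℝ)
    (D : ℝ) (hv : ∀ i, |v i| ≤ D) (j : Fin d) :
    |M.mulVec v j| ≤ (∑ i, |M j i|) * D := by
  have h1 : |M.mulVec v j| ≤ ∑ i, |M j i| * |v i| := by
    simp only [Matrix.mulVec, dotProduct]
    refine (Finset.abs_sum_le_sum_abs _ _).trans_eq ?_
    simp [abs_mul]
  refine h1.trans ?_
  rw [Finset.sum_mul]
  exact Finset.sum_le_sum fun i _ => mul_le_mul_of_nonneg_left (hv i) (abs_nonneg _)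


/-- Every point of space is within `∑∑|T i j|` of the lattice. -/
lemma aux_latt_cover {d : ℕ} (T : Matrix (Fin d) (Fin d) ℝ) (hT : IsUnit T.det)
    (x : Fin d → ℝ) : ∃ y ∈ lattPt T, dist x y ≤ ∑ j, ∑ i, |T j i| := by
  set z := T⁻¹.mulVec x with hz
  refine ⟨T.mulVec (fun i => ((⌊z i⌋ : ℤ) : ℝ)), ⟨_, rfl⟩, ?_⟩
  have hC0 : (0:ℝ) ≤ ∑ j, ∑ i, |T j i| := by positivity
  rw [dist_pi_le_iff hC0]
  intro j
  have hx : T.mulVec z = x := by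
    rw [hz, Matrix.mulVec_mulVec, Matrix.mul_nonsing_inv _ hT, Matrix.one_mulVec]
  have hxj : x j - T.mulVec (fun i => ((⌊z i⌋ : ℤ) : ℝ)) j
      = T.mulVec (z - fun i => ((⌊z i⌋ : ℤ) : ℝ)) j := by
    rw [Matrix.mulVec_sub, hx]; rfl
  rw [Real.dist_eq, hxj]
  have hb : ∀ i, |(z - fun i => ((⌊z i⌋ : ℤ) : ℝ)) i| ≤ 1 := by
    intro i
    have h1 : z i - ⌊z i⌋ = Int.fract (z i) := rfl
    simp only [Pi.sub_apply, h1]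
    rw [abs_of_nonneg (Int.fract_nonneg _)]
    exact (Int.fract_lt_one _).le
  refine (aux_mulVec_abs_coord_le T _ 1 hb j).trans ?_
  rw [mul_one]
  exact Finset.single_le_sum (f := fun j' => ∑ i, |T j' i|) (fun j' _ => by positivity) (Finset.mem_univ j)

/-- Distinct lattice points are separated. -/
lemma aux_latt_sep {d : ℕ} (T : Matrix (Fin d) (Fin d) ℝ) (hT : IsUnit T.det)
    {x y : Fin d → ℝ} (hx : x ∈ lattPt T) (hy : y ∈ lattPt T) (hxy : x ≠ y) :
    1 ≤ (∑ j, ∑ i, |T⁻¹ j i|) * dist x y := by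
  obtain ⟨k₁, rfl⟩ := hx
  obtain ⟨k₂, rfl⟩ := hy
  have hk : k₁ ≠ k₂ := by rintro rfl; exact hxy rfl
  obtain ⟨j, hj⟩ := Function.ne_iff.mp hk
  have h1 : (1:ℝ) ≤ |(k₁ j : ℝ) - (k₂ j : ℝ)| := by
    have := Int.one_le_abs (sub_ne_zero.mpr hj)
    push_cast at this ⊢
    exact_mod_cast this
  set a := T.mulVec (fun i => ((k₁ i : ℤ) : ℝ)) with ha
  set b := T.mulVec (fun i => ((k₂ i : ℤ) : ℝ)) with hb
  have key : (fun i => ((k₁ i : ℤ) : ℝ)) - (fun i => ((k₂ i : ℤ) : ℝ)) = T⁻¹.mulVec (a - b) := by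
    rw [ha, hb, ← Matrix.mulVec_sub, Matrix.mulVec_mulVec,
      Matrix.nonsing_inv_mul _ hT, Matrix.one_mulVec]
  have h2 : (k₁ j : ℝ) - (k₂ j : ℝ) = T⁻¹.mulVec (a - b) j := congrFun key j
  have hv : ∀ i, |(a - b) i| ≤ dist a b := by
    intro i
    have := dist_le_pi_dist a b i
    rwa [Real.dist_eq] at this
  have h3 : |T⁻¹.mulVec (a - b) j| ≤ (∑ i, |T⁻¹ j i|) * dist a b :=
    aux_mulVec_abs_coord_le _ _ _ hv j
  calc (1:ℝ) ≤ |(k₁ j : ℝ) - (k₂ j : ℝ)| := h1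
    _ = |T⁻¹.mulVec (a - b) j| := by rw [h2]
    _ ≤ (∑ i, |T⁻¹ j i|) * dist a b := h3
    _ ≤ (∑ j, ∑ i, |T⁻¹ j i|) * dist a b := by
        refine mul_le_mul_of_nonneg_right ?_ dist_nonneg
        exact Finset.single_le_sum (f := fun j' => ∑ i, |T⁻¹ j' i|) (fun j' _ => by positivity) (Finset.mem_univ j)

lemma aux_bddBelow {d : ℕ} (S : Set (Fin d → ℝ)) (x : Fin d → ℝ) :
    BddBelow (Set.range fun y : S => dist x (y : Fin d → ℝ)) := by
  refine ⟨0, ?_⟩; rintro r ⟨y, rfl⟩; exact dist_nonneg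


/-- Let `X = T(ℤ^d)` be a lattice and `P = X ∩ [0,1)^d` with `|P| ≥ 2`. Then the mesh ratio
of `P` satisfies `ρ_∞(P) ≤ 2 ρ_∞(X; ℝ^d)`. -/
theorem meshRatio_restriction_le
    (d : ℕ) (T : Matrix (Fin d) (Fin d) ℝ) (hT : IsUnit T.det)
    (hP : (lattPtCube T).Nontrivial) :
    covRadInf (lattPtCube T) (Set.Icc (0 : Fin d → ℝ) 1) / sepRadInf (lattPtCube T)
      ≤ 2 * (covRadInf (lattPt T) Set.univ / sepRadInf (lattPt T)) := by
  set C : ℝ := ∑ j, ∑ i, |T j i| with hC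
  set C' : ℝ := ∑ j, ∑ i, |T⁻¹ j i| with hC'
  have h0X : (0 : Fin d → ℝ) ∈ lattPt T := by
    refine ⟨0, ?_⟩
    have h : (fun i : Fin d => (((0 : Fin d → ℤ) i : ℤ) : ℝ)) = 0 := funext fun i => by simp
    rw [h, Matrix.mulVec_zero]
  have h0P : (0 : Fin d → ℝ) ∈ lattPtCube T :=
    ⟨h0X, fun i => ⟨le_refl 0, one_pos⟩⟩
  have h0I : (0 : Fin d → ℝ) ∈ Set.Icc (0 : Fin d → ℝ) 1 :=
    ⟨le_refl 0, fun i => by simp⟩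
  haveI : Nonempty ↥(lattPt T) := ⟨⟨0, h0X⟩⟩
  haveI : Nonempty ↥(lattPtCube T) := ⟨⟨0, h0P⟩⟩
  set H : ℝ := covRadInf (lattPt T) Set.univ with hH
  have hH0 : 0 ≤ H :=
    Real.iSup_nonneg fun x => Real.iInf_nonneg fun y => dist_nonneg
  -- g x ≤ H for all x
  have hgbdd : BddAbove (Set.range fun x : (Set.univ : Set (Fin d → ℝ)) =>
      ⨅ y : lattPt T, dist (x : Fin d → ℝ) (y : Fin d → ℝ)) := by
    refine ⟨C, ?_⟩
    rintro r ⟨x, rfl⟩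
    obtain ⟨y, hy, hdy⟩ := aux_latt_cover T hT (x : Fin d → ℝ)
    exact (ciInf_le (aux_bddBelow _ _) ⟨y, hy⟩).trans hdy
  have hgH : ∀ x : Fin d → ℝ, (⨅ y : lattPt T, dist x (y : Fin d → ℝ)) ≤ H :=
    fun x => le_ciSup hgbdd ⟨x, Set.mem_univ x⟩
  -- covering bound
  have hcov : covRadInf (lattPtCube T) (Set.Icc (0 : Fin d → ℝ) 1) ≤ 2 * H := by
    refine Real.iSup_le (fun x => ?_) (by linarith)
    have hx0 : ∀ i, 0 ≤ (x : Fin d → ℝ) i := fun i => by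
      have := x.2.1 i; simpa using this
    have hx1 : ∀ i, (x : Fin d → ℝ) i ≤ 1 := fun i => by
      have := x.2.2 i; simpa using this
    refine le_of_forall_pos_le_add fun δ hδ => ?_
    rcases le_or_gt 1 (2 * H + δ) with h1 | h1
    · refine le_trans (le_trans (ciInf_le (aux_bddBelow _ _) ⟨0, h0P⟩) ?_) h1
      rw [dist_pi_le_iff zero_le_one]
      intro i
      rw [Real.dist_eq]
      simp only [Pi.zero_apply, sub_zero]
      rw [abs_of_nonneg (hx0 i)]
      exact hx1 i
    · set δ' : ℝ := δ / 3 with hδ'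
      have hδ'pos : 0 < δ' := by positivity
      set x' : Fin d → ℝ := fun i => min (max ((x : Fin d → ℝ) i) (H + δ')) (1 - H - 2 * δ') with hx'
      have hord : H + δ' ≤ 1 - H - 2 * δ' := by
        simp only [hδ']; linarith
      have hx'lb : ∀ i, H + δ' ≤ x' i := fun i =>
        le_min (le_max_right _ _) hord
      have hx'ub : ∀ i, x' i ≤ 1 - H - 2 * δ' := fun i => min_le_right _ _
      have hclose : dist (x : Fin d → ℝ) x' ≤ H + 2 * δ' := by
        rw [dist_pi_le_iff (by linarith)]
        intro i
        rw [Real.dist_eq, abs_le]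
        have hub : x' i ≤ (x : Fin d → ℝ) i + (H + δ') := by
          refine (min_le_left _ _).trans (max_le (by linarith [hx0 i]) (by linarith [hx0 i]))
        have hlb : (x : Fin d → ℝ) i - (H + 2 * δ') ≤ x' i := by
          refine le_min ((by linarith : (x : Fin d → ℝ) i - (H + 2*δ') ≤ (x : Fin d → ℝ) i).trans
            (le_max_left _ _)) (by linarith [hx1 i])
        constructor <;> linarith
      have hglt : (⨅ y : lattPt T, dist x' (y : Fin d → ℝ)) < H + δ' :=
        lt_of_le_of_lt (hgH x') (by linarith)
      obtain ⟨⟨y, hyX⟩, hdy⟩ := exists_lt_of_ciInf_lt hglt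
      have hyc : ∀ i, dist (x' i) (y i) ≤ dist x' y := fun i => dist_le_pi_dist x' y i
      have hyP : y ∈ lattPtCube T := by
        refine ⟨hyX, fun i => ?_⟩
        have hi := (hyc i).trans_lt hdy
        rw [Real.dist_eq, abs_lt] at hi
        constructor
        · have := hx'lb i; linarith [hi.2]
        · have := hx'ub i; linarith [hi.1]
      refine le_trans (ciInf_le (aux_bddBelow _ _) ⟨y, hyP⟩) ?_
      calc dist (x : Fin d → ℝ) y ≤ dist (x : Fin d → ℝ) x' + dist x' y := dist_triangle _ _ _
        _ ≤ (H + 2 * δ') + (H + δ') := add_le_add hclose hdy.le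
        _ = 2 * H + δ := by simp only [hδ']; ring
  -- separation bounds
  obtain ⟨p, hp, q, hq, hpq⟩ := hP
  set SX : Set ℝ := {r : ℝ | ∃ x ∈ lattPt T, ∃ y ∈ lattPt T, x ≠ y ∧ r = dist x y} with hSX
  set SP : Set ℝ := {r : ℝ | ∃ x ∈ lattPtCube T, ∃ y ∈ lattPtCube T, x ≠ y ∧ r = dist x y} with hSP
  have hSPne : SP.Nonempty := ⟨dist p q, p, hp, q, hq, hpq, rfl⟩
  have hSXne : SX.Nonempty := ⟨dist p q, p, hp.1, q, hq.1, hpq, rfl⟩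
  have hC'pos : 0 < C' := by
    have h1 := aux_latt_sep T hT hp.1 hq.1 hpq
    have h2 : 0 < dist p q := dist_pos.mpr hpq
    nlinarith
  have hinfX : 1 / C' ≤ sInf SX := by
    refine le_csInf hSXne ?_
    rintro r ⟨a, ha, b, hb, hab, rfl⟩
    rw [div_le_iff₀ hC'pos]
    have := aux_latt_sep T hT ha hb hab
    linarith [this, mul_comm C' (dist a b)]
  have hinfXpos : 0 < sInf SX := lt_of_lt_of_le (by positivity) hinfX
  have hmono : sInf SX ≤ sInf SP := by
    refine csInf_le_csInf ⟨0, ?_⟩ hSPne ?_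
    · rintro r ⟨a, ha, b, hb, hab, rfl⟩; exact dist_nonneg
    · rintro r ⟨a, ha, b, hb, hab, rfl⟩
      exact ⟨a, ha.1, b, hb.1, hab, rfl⟩
  have hsepX : 0 < sepRadInf (lattPt T) := by
    rw [sepRadInf]; exact div_pos hinfXpos two_pos
  have hsep_le : sepRadInf (lattPt T) ≤ sepRadInf (lattPtCube T) := by
    rw [sepRadInf, sepRadInf]; gcongr
  have key := div_le_div₀ (by linarith : (0:ℝ) ≤ 2 * H) hcov hsepX hsep_le
  calc covRadInf (lattPtCube T) (Set.Icc (0 : Fin d → ℝ) 1) / sepRadInf (lattPtCube T)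
      ≤ (2 * H) / sepRadInf (lattPt T) := key
    _ = 2 * (H / sepRadInf (lattPt T)) := mul_div_assoc _ _ _
end

section
/- Let X = T(ℤ^d) be a lattice, a > 0, and P_a = a^{-1} X ∩ [0,1)^d with |P_a| ≥ 2. Then ρ_∞(P_a) ≤ 2 ρ_∞(X; ℝ^d), a bound independent of a. Consequently, for any increasing sequence a_1 < a_2 < … tending to infinity, the sequence of point sets (P_{a_i}) has uniformly bounded mesh ratio. -/
open scoped Pointwise

/-- The shrunk lattice `a⁻¹ X` intersected with the half-open unit cube `[0,1)^d`. -/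
def shrunkCube {d : ℕ} (T : Matrix (Fin d) (Fin d) ℝ) (a : ℝ) : Set (Fin d → ℝ) :=
  (a⁻¹ • lattPt T) ∩ {x | ∀ i, x i ∈ Set.Ico (0 : ℝ) 1}

private lemma mulVec_norm_le' {d : ℕ} (A : Matrix (Fin d) (Fin d) ℝ) (v : Fin d → ℝ) :
    ‖A.mulVec v‖ ≤ (∑ i, ∑ j, |A i j|) * ‖v‖ := by
  have hK : (0:ℝ) ≤ ∑ i, ∑ j, |A i j| := by positivity
  rw [pi_norm_le_iff_of_nonneg (by positivity)]
  intro i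
  have h1 : ‖A.mulVec v i‖ = |∑ j, A i j * v j| := by
    simp [Matrix.mulVec, dotProduct, Real.norm_eq_abs]
  rw [h1]
  calc |∑ j, A i j * v j| ≤ ∑ j, |A i j * v j| := Finset.abs_sum_le_sum_abs _ _
    _ ≤ ∑ j, |A i j| * ‖v‖ := by
        refine Finset.sum_le_sum fun j _ => ?_
        rw [abs_mul]
        exact mul_le_mul_of_nonneg_left ((Real.norm_eq_abs _) ▸ norm_le_pi_norm v j) (abs_nonneg _)
    _ = (∑ j, |A i j|) * ‖v‖ := by rw [Finset.sum_mul]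
    _ ≤ (∑ i, ∑ j, |A i j|) * ‖v‖ := by
        refine mul_le_mul_of_nonneg_right ?_ (norm_nonneg _)
        exact Finset.single_le_sum (f := fun i => ∑ j, |A i j|)
          (fun k _ => by positivity) (Finset.mem_univ i)

private lemma lattice_sep_lb' {d : ℕ} (T : Matrix (Fin d) (Fin d) ℝ) (hT : IsUnit T.det) :
    ∃ c > 0, ∀ x ∈ lattPt T, ∀ y ∈ lattPt T, x ≠ y → c ≤ dist x y := by
  set K := ∑ i, ∑ j, |T⁻¹ i j| with hKdef
  have hK0 : 0 ≤ K := by positivity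
  refine ⟨1/(K+1), by positivity, ?_⟩
  rintro x ⟨k1, rfl⟩ y ⟨k2, rfl⟩ hne
  set v : Fin d → ℝ := (fun i => (k1 i : ℝ)) - (fun i => (k2 i : ℝ)) with hv
  have hdist : dist (T.mulVec fun i => (k1 i:ℝ)) (T.mulVec fun i => (k2 i:ℝ))
      = ‖T.mulVec v‖ := by
    rw [dist_eq_norm, hv, Matrix.mulVec_sub]
  have hk12 : k1 ≠ k2 := by rintro rfl; exact hne rfl
  obtain ⟨i, hi⟩ := Function.ne_iff.1 hk12
  have h1 : (1:ℝ) ≤ |v i| := by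
    have : (1:ℤ) ≤ |k1 i - k2 i| := Int.one_le_abs (sub_ne_zero.2 hi)
    have h2 : v i = ((k1 i - k2 i : ℤ) : ℝ) := by simp [hv]
    rw [h2]
    exact_mod_cast this
  have hvrec : (T⁻¹).mulVec (T.mulVec v) = v := by
    rw [Matrix.mulVec_mulVec, Matrix.nonsing_inv_mul T hT, Matrix.one_mulVec]
  have h2 : ‖v‖ ≤ K * ‖T.mulVec v‖ := by
    calc ‖v‖ = ‖(T⁻¹).mulVec (T.mulVec v)‖ := by rw [hvrec]
      _ ≤ K * ‖T.mulVec v‖ := mulVec_norm_le' _ _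
  have h3 : (1:ℝ) ≤ ‖v‖ := le_trans h1 ((Real.norm_eq_abs _) ▸ norm_le_pi_norm v i)
  rw [hdist, div_le_iff₀ (by positivity)]
  nlinarith [norm_nonneg (T.mulVec v)]

private lemma lattice_cov_ub' {d : ℕ} (T : Matrix (Fin d) (Fin d) ℝ) (hT : IsUnit T.det) :
    ∃ C : ℝ, ∀ w : Fin d → ℝ, (⨅ y : lattPt T, dist w (y : Fin d → ℝ)) ≤ C := by
  refine ⟨(∑ i, ∑ j, |T i j|) * (1/2), fun w => ?_⟩
  set u := (T⁻¹).mulVec w with hu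
  set k : Fin d → ℤ := fun i => round (u i) with hk
  have hmem : T.mulVec (fun i => (k i : ℝ)) ∈ lattPt T := ⟨k, rfl⟩
  have hbb : BddBelow (Set.range fun y : lattPt T => dist w (y : Fin d → ℝ)) :=
    ⟨0, by rintro r ⟨y, rfl⟩; exact dist_nonneg⟩
  refine le_trans (ciInf_le hbb ⟨_, hmem⟩) ?_
  have hw : T.mulVec u = w := by
    rw [hu, Matrix.mulVec_mulVec, Matrix.mul_nonsing_inv T hT, Matrix.one_mulVec]
  have heq : dist w (T.mulVec fun i => (k i:ℝ)) = ‖T.mulVec (u - fun i => (k i:ℝ))‖ := by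
    rw [dist_eq_norm, Matrix.mulVec_sub, hw]
  rw [heq]
  refine le_trans (mulVec_norm_le' T _) (mul_le_mul_of_nonneg_left ?_ (by positivity))
  rw [pi_norm_le_iff_of_nonneg (by norm_num)]
  intro i
  simpa [Real.norm_eq_abs] using abs_sub_round (u i)

private lemma key' {d : ℕ} (T : Matrix (Fin d) (Fin d) ℝ) (hT : IsUnit T.det)
    (a : ℝ) (ha : 0 < a) (hnt : (shrunkCube T a).Nontrivial) :
    covRadInf (shrunkCube T a) (Set.Icc (0 : Fin d → ℝ) 1) / sepRadInf (shrunkCube T a)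
      ≤ 2 * (covRadInf (lattPt T) Set.univ / sepRadInf (lattPt T)) := by
  obtain ⟨C, hC⟩ := lattice_cov_ub' T hT
  have hbddA : BddAbove (Set.range fun x : (Set.univ : Set (Fin d → ℝ)) =>
      ⨅ y : lattPt T, dist (x : Fin d → ℝ) (y : Fin d → ℝ)) :=
    ⟨C, by rintro r ⟨x, rfl⟩; exact hC x⟩
  have hμub : ∀ w : Fin d → ℝ, (⨅ y : lattPt T, dist w (y : Fin d → ℝ))
      ≤ covRadInf (lattPt T) Set.univ :=
    fun w => le_ciSup hbddA (⟨w, Set.mem_univ w⟩ : (Set.univ : Set (Fin d → ℝ)))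
  have hμ0 : 0 ≤ covRadInf (lattPt T) Set.univ :=
    Real.iSup_nonneg fun x => Real.iInf_nonneg fun y => dist_nonneg
  set M := covRadInf (lattPt T) Set.univ with hM
  -- points from nontriviality
  obtain ⟨p, hp, q, hq, hpq⟩ := hnt
  obtain ⟨hp1, hp2⟩ := hp
  obtain ⟨hq1, hq2⟩ := hq
  obtain ⟨y1, hy1, hpy1⟩ := Set.mem_smul_set.1 hp1
  obtain ⟨y2, hy2, hpy2⟩ := Set.mem_smul_set.1 hq1
  have hy12 : y1 ≠ y2 := by rintro rfl; exact hpq (hpy1 ▸ hpy2 ▸ rfl)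
  -- separation of the lattice
  obtain ⟨c, hc0, hcsep⟩ := lattice_sep_lb' T hT
  set Dset := {r : ℝ | ∃ x ∈ lattPt T, ∃ y ∈ lattPt T, x ≠ y ∧ r = dist x y} with hDset
  have hDne : dist y1 y2 ∈ Dset := ⟨y1, hy1, y2, hy2, hy12, rfl⟩
  have hDlb : ∀ r ∈ Dset, c ≤ r := by
    rintro r ⟨x, hx, y, hy, hxy, rfl⟩; exact hcsep x hx y hy hxy
  have hsinfX : c ≤ sInf Dset := le_csInf ⟨_, hDne⟩ hDlb
  have hDbb : BddBelow Dset := ⟨c, hDlb⟩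
  have hsep_eq : sepRadInf (lattPt T) = sInf Dset / 2 := rfl
  have hσpos : 0 < sepRadInf (lattPt T) := by rw [hsep_eq]; linarith
  set σ := sepRadInf (lattPt T) with hσ
  -- separation of the shrunk set
  set Eset := {r : ℝ | ∃ x ∈ shrunkCube T a, ∃ y ∈ shrunkCube T a, x ≠ y ∧ r = dist x y}
    with hEset
  have hEne : dist p q ∈ Eset := ⟨p, ⟨hp1, hp2⟩, q, ⟨hq1, hq2⟩, hpq, rfl⟩
  have hElb : ∀ r ∈ Eset, a⁻¹ * sInf Dset ≤ r := by
    rintro r ⟨x, hx, y, hy, hxy, rfl⟩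
    obtain ⟨w1, hw1, hxw1⟩ := Set.mem_smul_set.1 hx.1
    obtain ⟨w2, hw2, hyw2⟩ := Set.mem_smul_set.1 hy.1
    have hw12 : w1 ≠ w2 := by rintro rfl; exact hxy (hxw1 ▸ hyw2 ▸ rfl)
    have h1 : dist x y = a⁻¹ * dist w1 w2 := by
      rw [← hxw1, ← hyw2, dist_smul₀, Real.norm_eq_abs, abs_of_pos (inv_pos.2 ha)]
    rw [h1]
    exact mul_le_mul_of_nonneg_left (csInf_le hDbb ⟨w1, hw1, w2, hw2, hw12, rfl⟩)
      (le_of_lt (inv_pos.2 ha))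
  have hsinfE : a⁻¹ * sInf Dset ≤ sInf Eset := le_csInf ⟨_, hEne⟩ hElb
  have hsepP_eq : sepRadInf (shrunkCube T a) = sInf Eset / 2 := rfl
  have hsepPge : a⁻¹ * σ ≤ sepRadInf (shrunkCube T a) := by
    rw [hsepP_eq, hsep_eq]; linarith
  have haσpos : 0 < a⁻¹ * σ := mul_pos (inv_pos.2 ha) hσpos
  have hsepPpos : 0 < sepRadInf (shrunkCube T a) := lt_of_lt_of_le haσpos hsepPge
  -- covering bound
  haveI hIccne : Nonempty ↥(Set.Icc (0 : Fin d → ℝ) 1) :=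
    ⟨⟨0, Set.mem_Icc.2 ⟨le_rfl, zero_le_one⟩⟩⟩
  haveI hlatne : Nonempty ↥(lattPt T) := ⟨⟨y1, hy1⟩⟩
  have hcovP : covRadInf (shrunkCube T a) (Set.Icc (0 : Fin d → ℝ) 1) ≤ 2 * (a⁻¹ * M) := by
    refine ciSup_le fun xx => ?_
    obtain ⟨x, hx⟩ := xx
    refine le_of_forall_pos_le_add fun ε hε => ?_
    have hbbP : BddBelow (Set.range fun y : shrunkCube T a => dist x (y : Fin d → ℝ)) :=
      ⟨0, by rintro r ⟨y, rfl⟩; exact dist_nonneg⟩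
    set h := a⁻¹ * M with hh
    have hh0 : 0 ≤ h := mul_nonneg (le_of_lt (inv_pos.2 ha)) hμ0
    have hx0 : ∀ i, 0 ≤ x i := fun i => (Set.mem_Icc.1 hx).1 i
    have hx1 : ∀ i, x i ≤ 1 := fun i => (Set.mem_Icc.1 hx).2 i
    rcases le_or_gt 1 (2*h) with hcase | hcase
    · have h1 : dist x p ≤ 1 := by
        rw [dist_pi_le_iff zero_le_one]
        intro i
        have hpi := hp2 i
        rw [Real.dist_eq, abs_sub_le_iff]
        exact ⟨by have := hpi.1; linarith [hx1 i], by have := hpi.2; linarith [hx0 i]⟩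
      calc (⨅ y : shrunkCube T a, dist x (y : Fin d → ℝ)) ≤ dist x p :=
            ciInf_le hbbP ⟨p, hp1, hp2⟩
        _ ≤ 2*h + ε := by linarith
    · set δ := min (ε/4) ((1-2*h)/4) with hδ
      have hδ0 : 0 < δ := lt_min (by linarith) (by linarith)
      have hδ1 : δ ≤ ε/4 := min_le_left _ _
      have hδ2 : δ ≤ (1-2*h)/4 := min_le_right _ _
      have horder : h + δ ≤ 1 - h - δ := by linarith
      set x' : Fin d → ℝ := fun i => max (min (x i) (1-h-δ)) (h+δ) with hx'
      have hx'lb : ∀ i, h+δ ≤ x' i := fun i => le_max_right _ _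
      have hx'ub : ∀ i, x' i ≤ 1-h-δ := fun i => max_le (min_le_right _ _) horder
      have hxx' : dist x x' ≤ h+δ := by
        rw [dist_pi_le_iff (by linarith)]
        intro i
        rw [Real.dist_eq, abs_sub_le_iff]
        constructor
        · have hmin : x i - (h+δ) ≤ min (x i) (1-h-δ) :=
            le_min (by linarith) (by linarith [hx1 i])
          have := le_max_left (min (x i) (1-h-δ)) (h+δ)
          simp only [hx']
          linarith
        · have hle : x' i ≤ x i + (h+δ) := by
            simp only [hx']
            exact max_le (by linarith [min_le_left (x i) (1-h-δ)]) (by linarith [hx0 i])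
          linarith
      have hinf : (⨅ y : lattPt T, dist (a • x') (y : Fin d → ℝ)) < M + a*(δ/2) := by
        refine lt_of_le_of_lt (hμub _) ?_
        nlinarith
      obtain ⟨⟨y, hy⟩, hylt⟩ := exists_lt_of_ciInf_lt hinf
      have hax' : a⁻¹ • (a • x') = x' := inv_smul_smul₀ (ne_of_gt ha) x'
      have hdzx' : dist x' (a⁻¹ • y) = a⁻¹ * dist (a • x') y := by
        conv_lhs => rw [← hax']
        rw [dist_smul₀, Real.norm_eq_abs, abs_of_pos (inv_pos.2 ha)]
      have hdzlt : dist x' (a⁻¹ • y) < h + δ/2 := by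
        rw [hdzx']
        have := mul_lt_mul_of_pos_left hylt (inv_pos.2 ha)
        have hcanc : a⁻¹ * (M + a*(δ/2)) = h + δ/2 := by
          rw [hh]; field_simp
        linarith [hcanc ▸ this]
      have hzcube : ∀ i, (a⁻¹ • y) i ∈ Set.Ico (0:ℝ) 1 := by
        intro i
        have hco := dist_le_pi_dist x' (a⁻¹ • y) i
        rw [Real.dist_eq] at hco
        have h1 := abs_le.1 (le_of_lt (lt_of_le_of_lt hco hdzlt))
        exact ⟨by linarith [hx'lb i, h1.2], by linarith [hx'ub i, h1.1]⟩
      have hzmem : (a⁻¹ • y) ∈ shrunkCube T a := ⟨Set.smul_mem_smul_set hy, hzcube⟩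
      calc (⨅ y : shrunkCube T a, dist x (y : Fin d → ℝ)) ≤ dist x (a⁻¹ • y) :=
            ciInf_le hbbP ⟨_, hzmem⟩
        _ ≤ dist x x' + dist x' (a⁻¹ • y) := dist_triangle _ _ _
        _ ≤ 2*h + ε := by linarith
  -- final assembly
  have hσne : σ ≠ 0 := ne_of_gt hσpos
  have hane : a ≠ 0 := ne_of_gt ha
  have hfinal : covRadInf (shrunkCube T a) (Set.Icc (0 : Fin d → ℝ) 1)
      / sepRadInf (shrunkCube T a) ≤ (2 * (a⁻¹ * M)) / (a⁻¹ * σ) :=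
    div_le_div₀ (by positivity) hcovP haσpos hsepPge
  refine le_trans hfinal (le_of_eq ?_)
  field_simp
  try ring

/-- Let `X = T(ℤ^d)`, `a > 0` and `P_a = a⁻¹X ∩ [0,1)^d` with `|P_a| ≥ 2`. Then
`ρ_∞(P_a) ≤ 2 ρ_∞(X; ℝ^d)`, a bound independent of `a`; consequently, for any increasing
sequence `a₁ < a₂ < …` tending to infinity, the point sets `P_{a_i}` have uniformly bounded
mesh ratio. -/
theorem meshRatio_shrunk_lattice_le
    (d : ℕ) (T : Matrix (Fin d) (Fin d) ℝ) (hT : IsUnit T.det) :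
    (∀ a : ℝ, 0 < a → (shrunkCube T a).Nontrivial →
      covRadInf (shrunkCube T a) (Set.Icc (0 : Fin d → ℝ) 1) / sepRadInf (shrunkCube T a)
        ≤ 2 * (covRadInf (lattPt T) Set.univ / sepRadInf (lattPt T))) ∧
    (∀ a : ℕ → ℝ, StrictMono a → (∀ i, 0 < a i) →
      Filter.Tendsto a Filter.atTop Filter.atTop →
      ∃ Cbound : ℝ, ∀ i, (shrunkCube T (a i)).Nontrivial →
        covRadInf (shrunkCube T (a i)) (Set.Icc (0 : Fin d → ℝ) 1)
            / sepRadInf (shrunkCube T (a i)) ≤ Cbound) := by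
  refine ⟨fun a ha hnt => key' T hT a ha hnt, fun a _ hpos _ => ?_⟩
  exact ⟨2 * (covRadInf (lattPt T) Set.univ / sepRadInf (lattPt T)),
    fun i hnt => key' T hT (a i) (hpos i) hnt⟩
end

section
/- Let g, N ∈ ℕ with gcd(g, N) = 1, and suppose g/N has continued fraction expansion [a_0; a_1, …, a_ℓ] with a_ℓ = 1, and set K = max(a_1, …, a_ℓ). Let X = T(ℤ²) where T has rows (1/N, 0) and (g/N, 1). Then the first successive minimum of X in the ℓ_∞ norm satisfies λ₁^(∞) ≥ 1/√((K+2)N). -/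
/-- The value of a finite continued fraction `[a₀; a₁, …, a_ℓ]` given as a list of
partial quotients. -/
noncomputable def cfVal : List ℕ → ℝ
  | [] => 0
  | [a] => (a : ℝ)
  | a :: rest => (a : ℝ) + 1 / cfVal rest

/-- The planar lattice `X = T(ℤ²)` with `T` having rows `(1/N, 0)` and `(g/N, 1)`:
`X = { (t/N, tg/N − u) : t, u ∈ ℤ }`. -/
def rank1Latt (g N : ℕ) : Set (Fin 2 → ℝ) :=
  {x | ∃ t u : ℤ, x = ![(t : ℝ) / N, (t : ℝ) * g / N - u]}

/-- First successive minimum of `X` in the `ℓ_∞` norm: the infimum of the norms of the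
nonzero lattice vectors. -/
noncomputable def firstMinInf (X : Set (Fin 2 → ℝ)) : ℝ :=
  sInf {r : ℝ | ∃ x ∈ X, x ≠ 0 ∧ r = ‖x‖}

namespace CFAux

lemma cfVal_singleton (a : ℕ) : cfVal [a] = (a : ℝ) := rfl

lemma cfVal_cons (a b : ℕ) (l : List ℕ) :
    cfVal (a :: b :: l) = (a : ℝ) + 1 / cfVal (b :: l) := rfl

lemma one_le_cfVal : ∀ {l : List ℕ}, l ≠ [] → (∀ b ∈ l, 1 ≤ b) → 1 ≤ cfVal l
  | [], h, _ => absurd rfl h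
  | [a], _, h => by
      have : 1 ≤ a := h a (by simp)
      simpa [cfVal_singleton] using by exact_mod_cast this
  | a :: b :: l, _, h => by
      have h1 : 1 ≤ cfVal (b :: l) :=
        one_le_cfVal (by simp) (fun c hc => h c (by simp [hc]))
      have ha : (1:ℝ) ≤ a := by exact_mod_cast h a (by simp)
      have : 0 < 1 / cfVal (b :: l) := by positivity
      rw [cfVal_cons]; linarith

lemma cfVal_le_of (a : ℕ) (l : List ℕ) (h : ∀ b ∈ l, 1 ≤ b) :
    cfVal (a :: l) ≤ (a : ℝ) + 1 := by
  cases l with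
  | nil => simp [cfVal_singleton]
  | cons b m =>
      have h1 : 1 ≤ cfVal (b :: m) := one_le_cfVal (by simp) h
      have : 1 / cfVal (b :: m) ≤ 1 := by
        rw [div_le_one (by linarith)]; linarith
      rw [cfVal_cons]; linarith

def bP (L : List ℕ) : ℕ → ℤ
  | 0 => 0
  | 1 => 1
  | n+2 => (L.getD n 1 : ℤ) * bP L (n+1) + bP L n

def bQ (L : List ℕ) : ℕ → ℤ
  | 0 => 1
  | 1 => 0
  | n+2 => (L.getD n 1 : ℤ) * bQ L (n+1) + bQ L n

lemma bP_succ (L : List ℕ) (n : ℕ) :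
    bP L (n+2) = (L.getD n 1 : ℤ) * bP L (n+1) + bP L n := rfl

lemma bQ_succ (L : List ℕ) (n : ℕ) :
    bQ L (n+2) = (L.getD n 1 : ℤ) * bQ L (n+1) + bQ L n := rfl

lemma bQ_zero (L : List ℕ) : bQ L 0 = 1 := rfl
lemma bQ_one (L : List ℕ) : bQ L 1 = 0 := rfl
lemma bQ_two (L : List ℕ) : bQ L 2 = 1 := by
  rw [bQ_succ, bQ_zero, bQ_one]; ring

lemma bQ_nonneg (L : List ℕ) : ∀ m, 0 ≤ bQ L m
  | 0 => by rw [bQ_zero]; norm_num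
  | 1 => by rw [bQ_one]
  | n+2 => by
      have h1 := bQ_nonneg L n
      have h2 := bQ_nonneg L (n+1)
      have h3 : (0:ℤ) ≤ (L.getD n 1 : ℤ) := Int.natCast_nonneg _
      rw [bQ_succ]; nlinarith

lemma bQ_pos (L : List ℕ) (hL1 : ∀ m, 1 ≤ m → 1 ≤ L.getD m 1) :
    ∀ m, 2 ≤ m → 1 ≤ bQ L m
  | 0, h => by omega
  | 1, h => by omega
  | 2, _ => by rw [bQ_two]
  | n+3, _ => by
      have h1 := bQ_pos L hL1 (n+2) (by omega)
      have h2 := bQ_nonneg L (n+1)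
      have h3 : (1:ℤ) ≤ (L.getD (n+1) 1 : ℤ) := by exact_mod_cast hL1 (n+1) (by omega)
      rw [bQ_succ]; nlinarith

lemma bQ_mono (L : List ℕ) (hL1 : ∀ m, 1 ≤ m → 1 ≤ L.getD m 1) :
    ∀ m, 1 ≤ m → bQ L m ≤ bQ L (m+1)
  | 0, h => by omega
  | 1, _ => by rw [bQ_one, bQ_two]; norm_num
  | n+2, _ => by
      have h1 := bQ_nonneg L (n+1)
      have h2 := bQ_nonneg L (n+2)
      have h3 : (1:ℤ) ≤ (L.getD (n+1) 1 : ℤ) := by exact_mod_cast hL1 (n+1) (by omega)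
      show bQ L (n+2) ≤ bQ L (n+3)
      rw [bQ_succ L (n+1)]; nlinarith

lemma det (L : List ℕ) : ∀ m, bQ L m * bP L (m+1) - bP L m * bQ L (m+1) = (-1)^m
  | 0 => by rw [bQ_zero, bQ_one]; show 1 * bP L 1 - bP L 0 * 0 = 1; rfl
  | n+1 => by
      have ih := det L n
      rw [bQ_succ, bP_succ]
      ring_nf
      ring_nf at ih
      linarith

lemma drop_tail_mem (a : ℕ) (M : List ℕ) (hent : ∀ b ∈ M, 1 ≤ b) (k : ℕ) :
    ∀ b ∈ (a :: M).drop (k+1), 1 ≤ b := by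
  intro b hb
  rw [List.drop_succ_cons] at hb
  exact hent b (List.drop_subset k M hb)

lemma drop_ne_nil {L : List ℕ} {m : ℕ} (h : m < L.length) : L.drop m ≠ [] := by
  have : 0 < (L.drop m).length := by rw [List.length_drop]; omega
  exact List.ne_nil_of_length_pos this

lemma drop_eq_cons {L : List ℕ} {m : ℕ} (h : m < L.length) :
    L.drop m = L.getD m 1 :: L.drop (m+1) := by
  rw [List.getD_eq_getElem L 1 h]
  exact List.drop_eq_getElem_cons h

lemma value_id (a : ℕ) (M : List ℕ) (hent : ∀ b ∈ M, 1 ≤ b) :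
    ∀ m, m < (a :: M).length →
      cfVal (a :: M) * ((bQ (a :: M) (m+1) : ℝ) * cfVal ((a :: M).drop m) + (bQ (a :: M) m : ℝ)) =
      (bP (a :: M) (m+1) : ℝ) * cfVal ((a :: M).drop m) + (bP (a :: M) m : ℝ) := by
  set L := a :: M with hL
  intro m
  induction m with
  | zero =>
      intro _
      show cfVal L * ((bQ L 1 : ℝ) * cfVal L + (bQ L 0 : ℝ)) = (bP L 1 : ℝ) * cfVal L + (bP L 0 : ℝ)
      rw [bQ_zero, bQ_one]
      show cfVal L * ((0:ℤ) * cfVal L + ((1:ℤ):ℝ)) = ((1:ℤ):ℝ) * cfVal L + ((0:ℤ):ℝ)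
      push_cast; ring
  | succ n IH =>
      intro h
      have hn : n < L.length := by omega
      have hV := IH hn
      have hd1 : L.drop (n+1) ≠ [] := drop_ne_nil (by omega)
      have hmem : ∀ b ∈ L.drop (n+1), 1 ≤ b := drop_tail_mem a M hent n
      have hc1 : 1 ≤ cfVal (L.drop (n+1)) := one_le_cfVal hd1 hmem
      have hc0 : cfVal (L.drop (n+1)) ≠ 0 := by linarith
      have hv : cfVal (L.drop n) = (L.getD n 1 : ℝ) + 1 / cfVal (L.drop (n+1)) := by
        rw [drop_eq_cons hn]
        obtain ⟨b, l, hbl⟩ : ∃ b l, L.drop (n+1) = b :: l :=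
          List.exists_cons_of_ne_nil hd1
        rw [hbl]
        exact cfVal_cons _ b l
      have hprod : cfVal (L.drop n) * cfVal (L.drop (n+1)) =
          (L.getD n 1 : ℝ) * cfVal (L.drop (n+1)) + 1 := by
        rw [hv]; field_simp
      rw [bQ_succ, bP_succ]
      push_cast
      linear_combination (cfVal (L.drop (n+1))) * hV +
        ((bP L (n+1) : ℝ) - cfVal L * (bQ L (n+1) : ℝ)) * hprod

lemma theta_id (a : ℕ) (M : List ℕ) (hent : ∀ b ∈ M, 1 ≤ b)
    (m : ℕ) (hm : m < (a :: M).length) :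
    ((bQ (a :: M) (m+1) : ℝ) * cfVal (a :: M) - (bP (a :: M) (m+1) : ℝ)) *
      ((bQ (a :: M) (m+1) : ℝ) * cfVal ((a :: M).drop m) + (bQ (a :: M) m : ℝ)) = (-1)^(m+1) := by
  have hV := value_id a M hent m hm
  have hdet : ((bQ (a :: M) m : ℝ) * (bP (a :: M) (m+1) : ℝ) -
      (bP (a :: M) m : ℝ) * (bQ (a :: M) (m+1) : ℝ)) = (-1)^m := by
    exact_mod_cast congrArg (Int.cast : ℤ → ℝ) (det (a :: M) m)
  linear_combination (bQ (a :: M) (m+1) : ℝ) * hV - hdet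

lemma final_zero (a : ℕ) (M : List ℕ) (hent : ∀ b ∈ M, 1 ≤ b) :
    (bQ (a :: M) ((a :: M).length + 1) : ℝ) * cfVal (a :: M) =
      (bP (a :: M) ((a :: M).length + 1) : ℝ) := by
  set L := a :: M with hL
  obtain ⟨k, hk⟩ : ∃ k, L.length = k + 1 := ⟨M.length, rfl⟩
  have hklt : k < L.length := by omega
  have hV := value_id a M hent k hklt
  have hdrop : L.drop k = [L.getD k 1] := by
    rw [drop_eq_cons hklt, List.drop_eq_nil_of_le (by omega)]
  have hval : cfVal (L.drop k) = (L.getD k 1 : ℝ) := by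
    rw [hdrop, cfVal_singleton]
  rw [hval] at hV
  have h2 : L.length + 1 = k + 2 := by omega
  rw [h2, bQ_succ, bP_succ]
  push_cast
  linear_combination hV

lemma abs_le_abs_add {x y : ℝ} (h : 0 ≤ x * y) : |x| ≤ |x + y| := by
  nlinarith [sq_abs x, sq_abs (x+y), abs_nonneg x, abs_nonneg (x+y), sq_nonneg y]

lemma best_approx (L : List ℕ) (x : ℝ) (m : ℕ)
    (hAB : ((bQ L (m+1):ℝ) * x - (bP L (m+1):ℝ)) * ((bQ L (m+2):ℝ) * x - (bP L (m+2):ℝ)) ≤ 0)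
    (t u : ℤ) (ht : 0 < t) (htq : t < bQ L (m+2)) :
    |(bQ L (m+1):ℝ) * x - (bP L (m+1):ℝ)| ≤ |(t:ℝ) * x - (u:ℝ)| := by
  set Qa := bQ L (m+1) with hQa'
  set Qb := bQ L (m+2) with hQb'
  set Pa := bP L (m+1) with hPa'
  set Pb := bP L (m+2) with hPb'
  have hQa : 0 ≤ Qa := bQ_nonneg L (m+1)
  have hQb0 : 0 ≤ Qb := bQ_nonneg L (m+2)
  have hdet : Qa * Pb - Pa * Qb = (-1)^(m+1) := det L (m+1)
  set e : ℤ := (-1)^m with he'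
  have he : e * e = 1 := by
    rw [he', ← pow_add]
    exact Even.neg_one_pow ⟨m, rfl⟩
  have hdet' : Qa * Pb - Pa * Qb = -e := by
    rw [hdet, he', pow_succ]; ring
  set x' : ℤ := e * (u * Qb - t * Pb) with hx''
  set y' : ℤ := e * (t * Pa - u * Qa) with hy''
  have h1 : x' * Qa + y' * Qb = t := by
    rw [hx'', hy'']
    linear_combination (-(e*t)) * hdet' + t * he
  have h2 : x' * Pa + y' * Pb = u := by
    rw [hx'', hy'']
    linear_combination (-(e*u)) * hdet' + u * he
  have hc1 : (x':ℝ) * (Qa:ℝ) + (y':ℝ) * (Qb:ℝ) = (t:ℝ) := by exact_mod_cast congrArg (Int.cast : ℤ → ℝ) h1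
  have hc2 : (x':ℝ) * (Pa:ℝ) + (y':ℝ) * (Pb:ℝ) = (u:ℝ) := by exact_mod_cast congrArg (Int.cast : ℤ → ℝ) h2
  set A : ℝ := (Qa:ℝ) * x - (Pa:ℝ) with hA'
  set B : ℝ := (Qb:ℝ) * x - (Pb:ℝ) with hB'
  have hsum : (t:ℝ) * x - (u:ℝ) = (x':ℝ) * A + (y':ℝ) * B := by
    rw [hA', hB']
    linear_combination (-x) * hc1 + hc2
  by_cases hy : y' = 0
  · have hx0 : x' ≠ 0 := by
      intro h0
      rw [h0, hy] at h1
      simp at h1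
      omega
    have hxx : (1:ℝ) ≤ |(x':ℝ)| := by
      have : 1 ≤ |x'| := Int.one_le_abs hx0
      calc (1:ℝ) = ((1:ℤ):ℝ) := by norm_num
        _ ≤ ((|x'|:ℤ):ℝ) := by exact_mod_cast this
        _ = |(x':ℝ)| := by push_cast; ring
    rw [hsum, hy]
    push_cast
    rw [zero_mul, add_zero, abs_mul]
    nlinarith [abs_nonneg A]
  · have hx0 : x' ≠ 0 := by
      intro h0
      rw [h0] at h1
      simp at h1
      have hy1 : y' ≤ -1 ∨ 1 ≤ y' := by omega
      rcases hy1 with hy1 | hy1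
      · nlinarith
      · nlinarith
    have hxy : x' * y' ≤ 0 := by
      have hx1 : x' ≤ -1 ∨ 1 ≤ x' := by omega
      have hy1 : y' ≤ -1 ∨ 1 ≤ y' := by omega
      rcases hx1 with hx1 | hx1 <;> rcases hy1 with hy1 | hy1
      · exfalso; nlinarith
      · nlinarith
      · nlinarith
      · exfalso; nlinarith
    have hxyR : (x':ℝ) * (y':ℝ) ≤ 0 := by exact_mod_cast hxy
    have hprod : 0 ≤ ((x':ℝ) * A) * ((y':ℝ) * B) := by nlinarith
    have hxx : (1:ℝ) ≤ |(x':ℝ)| := by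
      have : 1 ≤ |x'| := Int.one_le_abs hx0
      calc (1:ℝ) = ((1:ℤ):ℝ) := by norm_num
        _ ≤ ((|x'|:ℤ):ℝ) := by exact_mod_cast this
        _ = |(x':ℝ)| := by push_cast; ring
    calc |A| ≤ |(x':ℝ)| * |A| := by nlinarith [abs_nonneg A]
      _ = |(x':ℝ) * A| := (abs_mul _ _).symm
      _ ≤ |(x':ℝ) * A + (y':ℝ) * B| := abs_le_abs_add hprod
      _ = |(t:ℝ) * x - (u:ℝ)| := by rw [hsum]

lemma hL1_of (a : ℕ) (M : List ℕ) (hent : ∀ b ∈ M, 1 ≤ b) :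
    ∀ m, 1 ≤ m → 1 ≤ (a :: M).getD m 1 := by
  intro m hm
  obtain ⟨k, rfl⟩ : ∃ k, m = k + 1 := ⟨m - 1, by omega⟩
  rw [List.getD_cons_succ]
  by_cases h : k < M.length
  · rw [List.getD_eq_getElem M 1 h]
    exact hent _ (List.getElem_mem h)
  · rw [List.getD_eq_default M 1 (by omega)]

lemma key (a : ℕ) (M : List ℕ) (hM : M ≠ []) (hent : ∀ b ∈ M, 1 ≤ b)
    (K : ℕ) (hKb : ∀ b ∈ M, b ≤ K)
    (t u : ℤ) (ht : 0 < t) (htN : t < bQ (a :: M) ((a :: M).length + 1)) :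
    1 ≤ ((K:ℝ) + 2) * (t:ℝ) * |(t:ℝ) * cfVal (a :: M) - (u:ℝ)| := by
  set L := a :: M with hLdef
  have hL1 := hL1_of a M hent
  have hlen : 2 ≤ L.length := by
    rw [hLdef]
    have : 0 < M.length := List.length_pos_iff.mpr hM
    simp only [List.length_cons]; omega
  set n := L.length with hn
  set x := cfVal L with hx
  -- find j
  set P : ℕ → Prop := fun j => bQ L j ≤ t with hP
  have hP2 : P 2 := by rw [hP]; simp only; rw [bQ_two]; omega
  set j := Nat.findGreatest P n with hj
  have hj2 : 2 ≤ j := Nat.le_findGreatest hlen hP2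
  have hjn : j ≤ n := Nat.findGreatest_le n
  have hjt : bQ L j ≤ t := Nat.findGreatest_spec hlen hP2
  have hjt2 : t < bQ L (j+1) := by
    by_cases hcase : j = n
    · rw [hcase]; exact htN
    · have := Nat.findGreatest_is_greatest (show Nat.findGreatest P n < j + 1 by omega)
        (show j + 1 ≤ n by omega)
      rw [hP] at this; simp only at this; omega
  obtain ⟨m, hjm⟩ : ∃ m, j = m + 1 := ⟨j - 1, by omega⟩
  rw [hjm] at hjt hjt2
  have hm1 : 1 ≤ m := by omega
  have hmn : m < n := by omega
  -- theta at m
  have hTm := theta_id a M hent m hmn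
  set A : ℝ := (bQ L (m+1) : ℝ) * x - (bP L (m+1) : ℝ) with hA'
  set den : ℝ := (bQ L (m+1) : ℝ) * cfVal (L.drop m) + (bQ L m : ℝ) with hden'
  -- den bounds
  have hQm1 : (1:ℤ) ≤ bQ L (m+1) := bQ_pos L hL1 (m+1) (by omega)
  have hQm1R : (1:ℝ) ≤ (bQ L (m+1) : ℝ) := by exact_mod_cast hQm1
  have hQm0 : (0:ℤ) ≤ bQ L m := bQ_nonneg L m
  have hQm0R : (0:ℝ) ≤ (bQ L m : ℝ) := by exact_mod_cast hQm0
  have hdropne : L.drop m ≠ [] := drop_ne_nil (by omega)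
  have hdropmem : ∀ b ∈ L.drop m, 1 ≤ b := by
    obtain ⟨k, rfl⟩ : ∃ k, m = k + 1 := ⟨m - 1, by omega⟩
    exact drop_tail_mem a M hent k
  have hcf1 : 1 ≤ cfVal (L.drop m) := one_le_cfVal hdropne hdropmem
  have hdenpos : (1:ℝ) ≤ den := by
    rw [hden']; nlinarith
  have habs : |A| * den = 1 := by
    have := congrArg abs hTm
    rw [abs_mul, abs_of_pos (by linarith : (0:ℝ) < den)] at this
    rw [this]
    rw [abs_pow, abs_neg, abs_one, one_pow]
  -- theta sign product
  have hTm2 : A * ((bQ L (m+2) : ℝ) * x - (bP L (m+2) : ℝ)) ≤ 0 := by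
    by_cases hcase : m + 1 < n
    · have hT2 := theta_id a M hent (m+1) hcase
      set B : ℝ := (bQ L (m+2) : ℝ) * x - (bP L (m+2) : ℝ) with hB'
      set den2 : ℝ := (bQ L (m+2) : ℝ) * cfVal (L.drop (m+1)) + (bQ L (m+1) : ℝ) with hden2'
      have hQm2 : (1:ℤ) ≤ bQ L (m+2) := bQ_pos L hL1 (m+2) (by omega)
      have hQm2R : (1:ℝ) ≤ (bQ L (m+2) : ℝ) := by exact_mod_cast hQm2
      have hdropne2 : L.drop (m+1) ≠ [] := drop_ne_nil (by omega)
      have hdropmem2 : ∀ b ∈ L.drop (m+1), 1 ≤ b := drop_tail_mem a M hent m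
      have hcf2 : 1 ≤ cfVal (L.drop (m+1)) := one_le_cfVal hdropne2 hdropmem2
      have hden2pos : (1:ℝ) ≤ den2 := by rw [hden2']; nlinarith
      have hprodeq : (A * den) * (B * den2) = -1 := by
        rw [hTm, hT2]
        have h1 : ((-1:ℝ))^(m+1) * ((-1:ℝ))^(m+1) = 1 := by
          rw [← pow_add]; exact Even.neg_one_pow ⟨m+1, rfl⟩
        calc ((-1:ℝ))^(m+1) * ((-1:ℝ))^(m+1+1) = (((-1:ℝ))^(m+1) * ((-1:ℝ))^(m+1)) * (-1) := by
              rw [pow_succ]; ring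
          _ = -1 := by rw [h1]; ring
      nlinarith [hprodeq, mul_pos (show (0:ℝ) < den by linarith) (show (0:ℝ) < den2 by linarith)]
    · have hm1n : m + 1 = n := by omega
      have hfz := final_zero a M hent
      have : (bQ L (m+2) : ℝ) * x - (bP L (m+2) : ℝ) = 0 := by
        have h2 : (a :: M).length + 1 = m + 2 := by
          have hnn : (a :: M).length = n := rfl
          omega
        rw [← hx] at hfz
        rw [h2] at hfz
        rw [hLdef]
        linarith [hfz]
      rw [this, mul_zero]
  -- best approximation
  have hba := best_approx L x m hTm2 t u ht hjt2
  -- bound den ≤ (K+2) t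
  have hb : (L.getD m 1 : ℝ) ≤ (K : ℝ) := by
    have hmlt : m < L.length := by omega
    obtain ⟨k, hk⟩ : ∃ k, m = k + 1 := ⟨m - 1, by omega⟩
    have hkM : k < M.length := by
      rw [hLdef] at hmlt; simp only [List.length_cons] at hmlt; omega
    have : L.getD m 1 = M.getD k 1 := by rw [hLdef, hk, List.getD_cons_succ]
    rw [this, List.getD_eq_getElem M 1 hkM]
    exact_mod_cast hKb _ (List.getElem_mem hkM)
  have hcfle : cfVal (L.drop m) ≤ (L.getD m 1 : ℝ) + 1 := by
    rw [drop_eq_cons (show m < L.length by omega)]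
    apply cfVal_le_of
    exact fun b hb => hdropmem b (by rw [drop_eq_cons (show m < L.length by omega)]; exact List.mem_cons_of_mem _ hb)
  have hQmono : bQ L m ≤ bQ L (m+1) := bQ_mono L hL1 m hm1
  have hQmonoR : (bQ L m : ℝ) ≤ (bQ L (m+1) : ℝ) := by exact_mod_cast hQmono
  have hQt : (bQ L (m+1) : ℝ) ≤ (t:ℝ) := by exact_mod_cast hjt
  have htR : (1:ℝ) ≤ (t:ℝ) := by exact_mod_cast ht
  have hKR : (0:ℝ) ≤ (K:ℝ) := Nat.cast_nonneg K
  have hdenle : den ≤ ((K:ℝ) + 2) * (t:ℝ) := by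
    rw [hden']
    have h1 : (bQ L (m+1) : ℝ) * cfVal (L.drop m) ≤ (bQ L (m+1) : ℝ) * ((K:ℝ) + 1) := by
      apply mul_le_mul_of_nonneg_left _ (by linarith)
      linarith
    nlinarith
  -- conclude
  have habsnn : 0 ≤ |A| := abs_nonneg A
  calc (1:ℝ) = |A| * den := habs.symm
    _ ≤ |(t:ℝ) * x - (u:ℝ)| * (((K:ℝ) + 2) * (t:ℝ)) := by
        apply mul_le_mul hba hdenle (by linarith) (abs_nonneg _)
    _ = ((K:ℝ) + 2) * (t:ℝ) * |(t:ℝ) * x - (u:ℝ)| := by ring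

lemma mem_le_foldr : ∀ (l : List ℕ), ∀ a ∈ l, a ≤ l.foldr max 0 := by
  intro l
  induction l with
  | nil => simp
  | cons b m ih =>
      intro a ha
      rcases List.mem_cons.mp ha with h | h
      · subst h; exact le_max_left _ _
      · exact le_trans (ih a h) (le_max_right _ _)

lemma QN (g N : ℕ) (hN : 0 < N) (hgcd : Nat.Coprime g N)
    (a : ℕ) (M : List ℕ) (hent : ∀ b ∈ M, 1 ≤ b)
    (hcf : (g : ℝ) / N = cfVal (a :: M)) :
    bQ (a :: M) ((a :: M).length + 1) = (N : ℤ) := by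
  set L := a :: M with hLdef
  set n := L.length with hn
  set Q := bQ L (n+1) with hQ'
  set Pp := bP L (n+1) with hP'
  have hfz : (Q : ℝ) * cfVal L = (Pp : ℝ) := final_zero a M hent
  rw [← hcf] at hfz
  have hNne : (N:ℝ) ≠ 0 := by positivity
  have hZR : (Q : ℝ) * (g : ℝ) = (Pp : ℝ) * (N : ℝ) := by
    field_simp at hfz
    linarith
  have hZ : Q * (g : ℤ) = Pp * (N : ℤ) := by exact_mod_cast hZR
  have hcop1 : IsCoprime (N : ℤ) (g : ℤ) := by
    rw [Int.isCoprime_iff_gcd_eq_one, Int.gcd_natCast_natCast]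
    exact Nat.Coprime.symm hgcd
  have hNQ : (N : ℤ) ∣ Q := by
    apply hcop1.dvd_of_dvd_mul_right
    exact ⟨Pp, by linarith [hZ]⟩
  have hcop2 : IsCoprime Q Pp := by
    rw [Int.isCoprime_iff_gcd_eq_one]
    have hd := det L n
    have h1 : (Int.gcd Q Pp : ℤ) ∣ (-1:ℤ)^n := by
      rw [← hd]
      apply dvd_sub
      · exact Dvd.dvd.mul_left (Int.gcd_dvd_right _ _) _
      · exact Dvd.dvd.mul_left (Int.gcd_dvd_left _ _) _
    have h2 : Int.gcd Q Pp ∣ ((-1:ℤ)^n).natAbs := by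
      rw [← Int.natCast_dvd_natCast]
      exact Int.dvd_natAbs.mpr h1
    have h3 : ((-1:ℤ)^n).natAbs = 1 := by
      rw [Int.natAbs_pow]; simp
    rw [h3] at h2
    exact Nat.dvd_one.mp h2
  have hQN : Q ∣ (N : ℤ) := by
    apply hcop2.dvd_of_dvd_mul_left
    exact ⟨(g:ℤ), by linarith [hZ]⟩
  exact Int.dvd_antisymm (bQ_nonneg L (n+1)) (by positivity) hQN hNQ

end CFAux

open CFAux

/-- Let `g, N ∈ ℕ` with `gcd(g, N) = 1` and suppose `g/N` has continued fraction expansion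
`[a₀; a₁, …, a_ℓ]` with `a_ℓ = 1`, and set `K = max(a₁, …, a_ℓ)`. Then the first successive
minimum of the lattice `X = { (t/N, tg/N − u) }` in the `ℓ_∞` norm satisfies
`λ₁^(∞) ≥ 1/√((K+2)N)`. -/
theorem firstMin_rank1Latt_ge
    (g N : ℕ) (hN : 0 < N) (hgcd : Nat.Coprime g N)
    (a₀ : ℕ) (as : List ℕ) (has : as ≠ [])
    (hpos : ∀ a ∈ as, 1 ≤ a) (hlast : as.getLast? = some 1)
    (hcf : (g : ℝ) / N = cfVal (a₀ :: as))
    (K : ℕ) (hK : K = as.foldr max 0) :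
    firstMinInf (rank1Latt g N) ≥ 1 / Real.sqrt (((K : ℝ) + 2) * N) := by
  have hKb : ∀ b ∈ as, b ≤ K := fun b hb => hK ▸ mem_le_foldr as b hb
  have hQNeq : bQ (a₀ :: as) ((a₀ :: as).length + 1) = (N : ℤ) :=
    QN g N hN hgcd a₀ as hpos hcf
  set x : ℝ := cfVal (a₀ :: as) with hx
  set c : ℝ := 1 / Real.sqrt (((K : ℝ) + 2) * N) with hc
  have hNR : (1:ℝ) ≤ (N:ℝ) := by exact_mod_cast hN
  have hM1 : (1:ℝ) ≤ ((K:ℝ) + 2) * N := by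
    have : (0:ℝ) ≤ (K:ℝ) := Nat.cast_nonneg K
    nlinarith
  have hsqrt1 : (1:ℝ) ≤ Real.sqrt (((K : ℝ) + 2) * N) := by
    rw [show (1:ℝ) = Real.sqrt 1 by rw [Real.sqrt_one]]
    exact Real.sqrt_le_sqrt hM1
  have hcpos : 0 < c := by
    rw [hc]; positivity
  have hc1 : c ≤ 1 := by
    rw [hc, div_le_one (by linarith)]; exact hsqrt1
  have hcsq : c^2 = 1 / (((K : ℝ) + 2) * N) := by
    rw [hc, div_pow, one_pow, Real.sq_sqrt (by linarith)]
  show c ≤ firstMinInf (rank1Latt g N)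
  apply le_csInf
  · refine ⟨‖(![(0:ℝ), -1] : Fin 2 → ℝ)‖, ![(0:ℝ), -1], ⟨0, 1, ?_⟩, ?_, rfl⟩
    · funext i
      fin_cases i <;> simp
    · intro h
      have := congrFun h 1
      simp at this
  · rintro r ⟨v, ⟨t, u, rfl⟩, hv0, rfl⟩
    have hNne : (N:ℝ) ≠ 0 := by positivity
    have hv1 : (![(t : ℝ) / N, (t : ℝ) * g / N - u] : Fin 2 → ℝ) 1 = (t:ℝ) * x - u := by
      simp only [Matrix.cons_val_one, Matrix.head_cons, Matrix.cons_val_zero]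
      rw [← hcf]; ring
    have hv00 : (![(t : ℝ) / N, (t : ℝ) * g / N - u] : Fin 2 → ℝ) 0 = (t:ℝ) / N := by
      simp
    have hn0 : |(t:ℝ) / N| ≤ ‖(![(t : ℝ) / N, (t : ℝ) * g / N - u] : Fin 2 → ℝ)‖ := by
      have := norm_le_pi_norm (![(t : ℝ) / N, (t : ℝ) * g / N - u] : Fin 2 → ℝ) 0
      rwa [hv00, Real.norm_eq_abs] at this
    have hn1 : |(t:ℝ) * x - u| ≤ ‖(![(t : ℝ) / N, (t : ℝ) * g / N - u] : Fin 2 → ℝ)‖ := by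
      have := norm_le_pi_norm (![(t : ℝ) / N, (t : ℝ) * g / N - u] : Fin 2 → ℝ) 1
      rwa [hv1, Real.norm_eq_abs] at this
    set nv : ℝ := ‖(![(t : ℝ) / N, (t : ℝ) * g / N - u] : Fin 2 → ℝ)‖ with hnv
    by_cases ht0 : t = 0
    · -- t = 0, so u ≠ 0
      have hu0 : u ≠ 0 := by
        intro hu
        apply hv0
        funext i
        fin_cases i <;> simp [ht0, hu]
      have h1 : (1:ℝ) ≤ |(t:ℝ) * x - u| := by
        rw [ht0]
        push_cast
        rw [zero_mul, zero_sub, abs_neg]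
        have : 1 ≤ |u| := Int.one_le_abs hu0
        calc (1:ℝ) = ((1:ℤ):ℝ) := by norm_num
          _ ≤ ((|u|:ℤ):ℝ) := by exact_mod_cast this
          _ = |(u:ℝ)| := by push_cast; ring
      linarith
    · -- t ≠ 0
      obtain ⟨t₁, u₁, ht₁, ht₁t, habs1⟩ :
          ∃ t₁ u₁ : ℤ, 0 < t₁ ∧ (t₁:ℝ) = |(t:ℝ)| ∧
            |(t:ℝ) * x - u| = |(t₁:ℝ) * x - u₁| := by
        rcases lt_or_gt_of_ne ht0 with hlt | hgt
        · refine ⟨-t, -u, by omega, ?_, ?_⟩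
          · push_cast
            rw [abs_of_neg (by exact_mod_cast hlt)]
          · push_cast
            rw [← abs_neg]
            congr 1
            ring
        · refine ⟨t, u, hgt, ?_, rfl⟩
          rw [abs_of_pos (by exact_mod_cast hgt)]
      by_cases htN : (N:ℤ) ≤ t₁
      · -- |t|/N ≥ 1
        have h1 : (1:ℝ) ≤ |(t:ℝ)/N| := by
          rw [abs_div, abs_of_pos (by linarith : (0:ℝ) < (N:ℝ))]
          rw [le_div_iff₀ (by linarith)]
          rw [← ht₁t]
          have : ((N:ℤ):ℝ) ≤ (t₁:ℝ) := by exact_mod_cast htN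
          push_cast at this ⊢
          linarith
        linarith
      · push_neg at htN
        have hkey := key a₀ as has hpos K hKb t₁ u₁ ht₁
          (by rw [hQNeq]; exact htN)
        rw [← hx] at hkey
        have habs1' : |(t₁:ℝ) * x - u₁| = |(t:ℝ) * x - u| := habs1.symm
        rw [habs1'] at hkey
        -- product bound
        have ht₁pos : (0:ℝ) < (t₁:ℝ) := by exact_mod_cast ht₁
        have hvt : |(t:ℝ)/N| = (t₁:ℝ)/N := by
          rw [abs_div, abs_of_pos (by linarith : (0:ℝ) < (N:ℝ)), ht₁t]
        have hprod : c^2 ≤ |(t:ℝ)/N| * |(t:ℝ) * x - u| := by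
          rw [hcsq, hvt]
          rw [div_mul_eq_mul_div, le_div_iff₀ (by linarith)]
          have hKpos : (0:ℝ) < (K:ℝ) + 2 := by positivity
          calc 1 / (((K:ℝ) + 2) * N) * N = ((K:ℝ)+2)⁻¹ := by
                field_simp
            _ ≤ (t₁:ℝ) * |(t:ℝ) * x - u| := by
                rw [inv_le_iff_one_le_mul₀ hKpos]
                nlinarith [hkey]
        have hnvnn : 0 ≤ nv := norm_nonneg _
        have hsq : c^2 ≤ nv^2 := by
          calc c^2 ≤ |(t:ℝ)/N| * |(t:ℝ) * x - u| := hprod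
            _ ≤ nv * nv := mul_le_mul hn0 hn1 (abs_nonneg _) hnvnn
            _ = nv^2 := by ring
        calc c = Real.sqrt (c^2) := (Real.sqrt_sq hcpos.le).symm
          _ ≤ Real.sqrt (nv^2) := Real.sqrt_le_sqrt hsq
          _ = nv := Real.sqrt_sq hnvnn
end
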